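/- arXiv:1810.07820 — 4 statements merged into one kernel-verified Lean document; each statement's English description precedes it below -/
import Mathlib

section
/- Let f ∈ L¹(𝕋, B(H)) be a Bochner-integrable B(H)-valued function, and let A_f be the Toeplitz matrix with entries \hat{f}(j−k) ∈ B(H). Then A_f is a two-sided Schur multiplier of B(ℓ²(H)) with ‖A_f‖_{M(ℓ²(H))} ≤ ‖f‖_{L¹(𝕋,B(H))}; moreover A_f ∈ L¹(ℓ²(H)). -/
open Finset Filter

noncomputable section

variable {H : Type*} [NormedAddCommGroup H] [InnerProductSpace ℂ H]
  [CompleteSpace H] [TopologicalSpace.SeparableSpace H]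

/-- `A` defines a bounded operator on `ℓ²(H)` with norm at most `C`, expressed through
uniform bounds of the associated bilinear form on finitely supported sequences. -/
def SchurBoundedBy (A : ℕ → ℕ → (H →L[ℂ] H)) (C : ℝ) : Prop :=
  ∀ (F G : Finset ℕ) (x y : ℕ → H),
    ‖∑ k ∈ G, ∑ j ∈ F, (inner ℂ (A k j (x j)) (y k) : ℂ)‖ ≤
      C * Real.sqrt (∑ j ∈ F, ‖x j‖ ^ 2) * Real.sqrt (∑ k ∈ G, ‖y k‖ ^ 2)

/-- `A ∈ B(ℓ²(H))`. -/
def MemB (A : ℕ → ℕ → (H →L[ℂ] H)) : Prop :=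
  ∃ C, 0 ≤ C ∧ SchurBoundedBy A C

/-- The Schur product of two operator matrices: entrywise composition. -/
def schur (A B : ℕ → ℕ → (H →L[ℂ] H)) : ℕ → ℕ → (H →L[ℂ] H) :=
  fun k j => (A k j).comp (B k j)

/-- `A` is a right Schur multiplier with multiplier norm at most `C`. -/
def MrBoundedBy (A : ℕ → ℕ → (H →L[ℂ] H)) (C : ℝ) : Prop :=
  ∀ (B : ℕ → ℕ → (H →L[ℂ] H)) (D : ℝ), 0 ≤ D → SchurBoundedBy B D →
    SchurBoundedBy (schur B A) (C * D)

/-- `A` is a left Schur multiplier with multiplier norm at most `C`. -/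
def MlBoundedBy (A : ℕ → ℕ → (H →L[ℂ] H)) (C : ℝ) : Prop :=
  ∀ (B : ℕ → ℕ → (H →L[ℂ] H)) (D : ℝ), 0 ≤ D → SchurBoundedBy B D →
    SchurBoundedBy (schur A B) (C * D)

/-- `A ∈ M_r(ℓ²(H))`. -/
def MemMr (A : ℕ → ℕ → (H →L[ℂ] H)) : Prop :=
  ∃ C, 0 ≤ C ∧ MrBoundedBy A C

/-- `A ∈ M_l(ℓ²(H))`. -/
def MemMl (A : ℕ → ℕ → (H →L[ℂ] H)) : Prop :=
  ∃ C, 0 ≤ C ∧ MlBoundedBy A C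

/-- A matrix polynomial: supported on finitely many diagonals, with uniformly
bounded operator entries. -/
def IsMatPoly (A : ℕ → ℕ → (H →L[ℂ] H)) : Prop :=
  (∃ N : ℕ, ∀ k j : ℕ, N < ((j : ℤ) - (k : ℤ)).natAbs → A k j = 0) ∧
    ∃ M : ℝ, ∀ k j : ℕ, ‖A k j‖ ≤ M

/-- `A ∈ L¹_r(ℓ²(H))`: `A` is a right Schur multiplier lying in the closure of the
matrix polynomials in the right multiplier norm. -/
def MemL1r (A : ℕ → ℕ → (H →L[ℂ] H)) : Prop :=
  MemMr A ∧ ∀ ε : ℝ, 0 < ε → ∃ P : ℕ → ℕ → (H →L[ℂ] H),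
    IsMatPoly P ∧ MrBoundedBy (fun k j => A k j - P k j) ε

/-- `A ∈ L¹_l(ℓ²(H))`: `A` is a left Schur multiplier lying in the closure of the
matrix polynomials in the left multiplier norm. -/
def MemL1l (A : ℕ → ℕ → (H →L[ℂ] H)) : Prop :=
  MemMl A ∧ ∀ ε : ℝ, 0 < ε → ∃ P : ℕ → ℕ → (H →L[ℂ] H),
    IsMatPoly P ∧ MlBoundedBy (fun k j => A k j - P k j) ε

open Real in
/-- The `l`-th Fourier coefficient of a `B(H)`-valued integrable function:
`\hat{f}(l) = (1/2π)∫_{-π}^{π} e^{-ilt} f(t) dt` (Bochner integral). -/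
def opFourierCoeff (f : ℝ → (H →L[ℂ] H)) (l : ℤ) : H →L[ℂ] H :=
  ((2 * π)⁻¹ : ℝ) • ∫ t in (-π)..π, Complex.exp (-(l : ℂ) * t * Complex.I) • f t


section ToeplitzAux

open MeasureTheory Real Set

/-- The Lebesgue measure restricted to the period interval `(-π, π]`. -/
def tmu : Measure ℝ := volume.restrict (Ioc (-π) π)

instance : IsFiniteMeasure tmu := by
  constructor
  rw [tmu, Measure.restrict_apply_univ]
  exact measure_Ioc_lt_top

/-- The exponential `e^{-i l t}`. -/
def eF (l : ℤ) (t : ℝ) : ℂ := Complex.exp (-(l : ℂ) * (t : ℂ) * Complex.I)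

lemma eF_continuous (l : ℤ) : Continuous (eF l) := by
  unfold eF; fun_prop

lemma eF_norm (l : ℤ) (t : ℝ) : ‖eF l t‖ = 1 := by
  have h : (-(l : ℂ) * (t : ℂ) * Complex.I) = ((-(l * t) : ℝ) : ℂ) * Complex.I := by
    push_cast; ring
  rw [eF, h, Complex.norm_exp_ofReal_mul_I]

lemma eF_mul (a b : ℤ) (t : ℝ) : eF a t * eF b t = eF (a + b) t := by
  rw [eF, eF, eF, ← Complex.exp_add]; congr 1; push_cast; ring

lemma eF_conj (l : ℤ) (t : ℝ) : (starRingEnd ℂ) (eF l t) = eF (-l) t := by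
  rw [eF, eF, ← Complex.exp_conj]
  congr 1
  simp only [map_mul, map_neg, Complex.conj_I, Complex.conj_ofReal, map_intCast]
  push_cast
  ring

section ESpace

variable {E' : Type*} [NormedAddCommGroup E'] [NormedSpace ℂ E']

lemma integrable_eF_smul {g : ℝ → E'} {μ : Measure ℝ} (hg : Integrable g μ) (l : ℤ) :
    Integrable (fun t => eF l t • g t) μ := by
  refine hg.norm.mono' (((eF_continuous l).aestronglyMeasurable).smul hg.1) ?_
  filter_upwards with t
  rw [norm_smul, eF_norm, one_mul]

lemma trig_integrable (s : Finset ℤ) (b : ℤ → E') :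
    Integrable (fun t => ∑ n ∈ s, eF n t • b n) tmu := by
  refine integrable_finset_sum _ fun n _ => ?_
  exact ((eF_continuous n).smul continuous_const).integrableOn_Ioc

end ESpace

lemma pi_interval_le : -π ≤ π := by linarith [pi_pos]

lemma opFourierCoeff_eq (g : ℝ → (H →L[ℂ] H)) (l : ℤ) :
    opFourierCoeff g l = ((2 * π)⁻¹ : ℝ) • ∫ t, eF l t • g t ∂tmu := by
  rw [opFourierCoeff, intervalIntegral.integral_of_le pi_interval_le]
  rfl

lemma opFourierCoeff_norm_le (g : ℝ → (H →L[ℂ] H)) (l : ℤ) :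
    ‖opFourierCoeff g l‖ ≤ (2 * π)⁻¹ * ∫ t, ‖g t‖ ∂tmu := by
  rw [opFourierCoeff_eq, norm_smul, Real.norm_eq_abs,
    abs_of_nonneg (by positivity : (0:ℝ) ≤ (2 * π)⁻¹)]
  refine mul_le_mul_of_nonneg_left ?_ (by positivity)
  refine le_trans (norm_integral_le_integral_norm _) (le_of_eq ?_)
  simp only [norm_smul, eF_norm, one_mul]

lemma opFourierCoeff_apply {g : ℝ → (H →L[ℂ] H)} (hg : Integrable g tmu) (l : ℤ) (v : H) :
    opFourierCoeff g l v = ((2 * π)⁻¹ : ℝ) • ∫ t, eF l t • g t v ∂tmu := by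
  rw [opFourierCoeff_eq, ContinuousLinearMap.smul_apply,
    ContinuousLinearMap.integral_apply (integrable_eF_smul hg l)]
  simp only [ContinuousLinearMap.smul_apply]

set_option synthInstance.maxHeartbeats 1000000 in
lemma opFourierCoeff_sub {f g : ℝ → (H →L[ℂ] H)} (hf : Integrable f tmu)
    (hg : Integrable g tmu) (l : ℤ) :
    opFourierCoeff (fun t => f t - g t) l = opFourierCoeff f l - opFourierCoeff g l := by
  rw [opFourierCoeff_eq, opFourierCoeff_eq, opFourierCoeff_eq, ← smul_sub]
  congr 1
  rw [← integral_sub (integrable_eF_smul hf l) (integrable_eF_smul hg l)]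
  congr 1; funext t; rw [smul_sub]

lemma inner_integral_left {φ : ℝ → H} (hφ : Integrable φ tmu) (c : H) :
    (inner ℂ (∫ t, φ t ∂tmu) c : ℂ) = ∫ t, (inner ℂ (φ t) c : ℂ) ∂tmu := by
  have h1 : (inner ℂ (∫ t, φ t ∂tmu) c : ℂ)
      = (starRingEnd ℂ) (inner ℂ c (∫ t, φ t ∂tmu) : ℂ) := (inner_conj_symm _ _).symm
  rw [h1, ← integral_inner hφ, ← integral_conj]
  congr 1; funext t; rw [inner_conj_symm]

lemma schurBoundedBy_mono {A : ℕ → ℕ → (H →L[ℂ] H)} {C C' : ℝ}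
    (h : SchurBoundedBy A C) (hCC : C ≤ C') : SchurBoundedBy A C' := by
  intro F G x y
  refine (h F G x y).trans ?_
  exact mul_le_mul_of_nonneg_right
    (mul_le_mul_of_nonneg_right hCC (Real.sqrt_nonneg _)) (Real.sqrt_nonneg _)

lemma mlBoundedBy_mono {A : ℕ → ℕ → (H →L[ℂ] H)} {C C' : ℝ}
    (h : MlBoundedBy A C) (hCC : C ≤ C') : MlBoundedBy A C' :=
  fun B D hD hB => schurBoundedBy_mono (h B D hD hB) (mul_le_mul_of_nonneg_right hCC hD)

lemma mrBoundedBy_mono {A : ℕ → ℕ → (H →L[ℂ] H)} {C C' : ℝ}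
    (h : MrBoundedBy A C) (hCC : C ≤ C') : MrBoundedBy A C' :=
  fun B D hD hB => schurBoundedBy_mono (h B D hD hB) (mul_le_mul_of_nonneg_right hCC hD)

lemma toeplitz_left_bound {g : ℝ → (H →L[ℂ] H)} (hg : Integrable g tmu) :
    MlBoundedBy (fun k j => opFourierCoeff g ((j : ℤ) - (k : ℤ)))
      ((2 * π)⁻¹ * ∫ t, ‖g t‖ ∂tmu) := by
  intro B D hD hB F G x y
  have hX0 : (0:ℝ) ≤ Real.sqrt (∑ j ∈ F, ‖x j‖ ^ 2) := Real.sqrt_nonneg _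
  have hY0 : (0:ℝ) ≤ Real.sqrt (∑ k ∈ G, ‖y k‖ ^ 2) := Real.sqrt_nonneg _
  set X := Real.sqrt (∑ j ∈ F, ‖x j‖ ^ 2) with hXdef
  set Y := Real.sqrt (∑ k ∈ G, ‖y k‖ ^ 2) with hYdef
  set q : ℕ → ℕ → ℝ → ℂ := fun k j t =>
    (inner ℂ (eF ((j : ℤ) - (k : ℤ)) t • g t (B k j (x j))) (y k) : ℂ) with hq
  have hq_int : ∀ k j : ℕ, Integrable (q k j) tmu := fun k j =>
    (integrable_eF_smul (hg.apply_continuousLinearMap _) _).inner_const _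
  have key : ∀ k j : ℕ,
      (inner ℂ ((schur (fun k j => opFourierCoeff g ((j : ℤ) - (k : ℤ))) B) k j (x j)) (y k) : ℂ)
        = ((2 * π)⁻¹ : ℝ) • ∫ t, q k j t ∂tmu := by
    intro k j
    have hint := integrable_eF_smul (μ := tmu) (hg.apply_continuousLinearMap (B k j (x j)))
      ((j : ℤ) - (k : ℤ))
    show (inner ℂ (opFourierCoeff g ((j : ℤ) - (k : ℤ)) (B k j (x j))) (y k) : ℂ) = _
    rw [opFourierCoeff_apply hg, RCLike.real_smul_eq_coe_smul (K := ℂ), inner_smul_left,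
      inner_integral_left hint, RCLike.conj_ofReal,
      RCLike.real_smul_eq_coe_smul (K := ℂ) ((2 * π)⁻¹ : ℝ), smul_eq_mul]
  have total : (∑ k ∈ G, ∑ j ∈ F,
        (inner ℂ ((schur (fun k j => opFourierCoeff g ((j : ℤ) - (k : ℤ))) B) k j (x j)) (y k) : ℂ))
      = ((2 * π)⁻¹ : ℝ) • ∫ t, ∑ k ∈ G, ∑ j ∈ F, q k j t ∂tmu := by
    rw [integral_finset_sum _ fun k _ => integrable_finset_sum _ fun j _ => hq_int k j,
      Finset.smul_sum]
    refine Finset.sum_congr rfl fun k _ => ?_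
    rw [integral_finset_sum _ fun j _ => hq_int k j, Finset.smul_sum]
    exact Finset.sum_congr rfl fun j _ => key k j
  rw [total, norm_smul, Real.norm_eq_abs, abs_of_nonneg (by positivity : (0:ℝ) ≤ (2 * π)⁻¹)]
  have hS_int : Integrable (fun t => ∑ k ∈ G, ∑ j ∈ F, q k j t) tmu :=
    integrable_finset_sum _ fun k _ => integrable_finset_sum _ fun j _ => hq_int k j
  have hpt : ∀ t : ℝ, ‖∑ k ∈ G, ∑ j ∈ F, q k j t‖ ≤ ‖g t‖ * (D * X * Y) := by
    intro t
    have hterm : ∀ k j : ℕ, q k j t = (inner ℂ (B k j (eF (j : ℤ) t • x j))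
        ((ContinuousLinearMap.adjoint (g t)) (eF (k : ℤ) t • y k)) : ℂ) := by
      intro k j
      have hL : q k j t
          = eF (-((j : ℤ) - (k : ℤ))) t * (inner ℂ (g t (B k j (x j))) (y k) : ℂ) := by
        show (inner ℂ (eF ((j : ℤ) - (k : ℤ)) t • g t (B k j (x j))) (y k) : ℂ) = _
        rw [inner_smul_left, eF_conj]
      have hR : (inner ℂ (B k j (eF (j : ℤ) t • x j))
            ((ContinuousLinearMap.adjoint (g t)) (eF (k : ℤ) t • y k)) : ℂ)
          = eF (-(j : ℤ)) t * (eF (k : ℤ) t * (inner ℂ (g t (B k j (x j))) (y k) : ℂ)) := by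
        rw [_root_.map_smul, inner_smul_left, eF_conj, ContinuousLinearMap.adjoint_inner_right,
          inner_smul_right]
      rw [hL, hR, ← mul_assoc, eF_mul]
      have harg : (-(j : ℤ) + (k : ℤ)) = -((j : ℤ) - (k : ℤ)) := by ring
      rw [harg]
    have hx'eq : Real.sqrt (∑ j ∈ F, ‖eF (j : ℤ) t • x j‖ ^ 2) = X := by
      rw [hXdef]
      congr 1
      exact Finset.sum_congr rfl fun j _ => by rw [norm_smul, eF_norm, one_mul]
    have hy'le : Real.sqrt
          (∑ k ∈ G, ‖(ContinuousLinearMap.adjoint (g t)) (eF (k : ℤ) t • y k)‖ ^ 2)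
        ≤ ‖g t‖ * Y := by
      have h1 : ∑ k ∈ G, ‖(ContinuousLinearMap.adjoint (g t)) (eF (k : ℤ) t • y k)‖ ^ 2
          ≤ ∑ k ∈ G, (‖g t‖ * ‖y k‖) ^ 2 := by
        refine Finset.sum_le_sum fun k _ => ?_
        refine pow_le_pow_left₀ (norm_nonneg _) ?_ 2
        refine le_trans (ContinuousLinearMap.le_opNorm _ _) ?_
        rw [norm_smul, eF_norm, one_mul, LinearIsometryEquiv.norm_map]
      refine le_trans (Real.sqrt_le_sqrt h1) ?_
      have h2 : ∑ k ∈ G, (‖g t‖ * ‖y k‖) ^ 2 = ‖g t‖ ^ 2 * ∑ k ∈ G, ‖y k‖ ^ 2 := by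
        rw [Finset.mul_sum]; exact Finset.sum_congr rfl fun k _ => by ring
      rw [h2, Real.sqrt_mul (sq_nonneg _), Real.sqrt_sq (norm_nonneg _), hYdef]
    calc ‖∑ k ∈ G, ∑ j ∈ F, q k j t‖
        = ‖∑ k ∈ G, ∑ j ∈ F, (inner ℂ (B k j (eF (j : ℤ) t • x j))
            ((ContinuousLinearMap.adjoint (g t)) (eF (k : ℤ) t • y k)) : ℂ)‖ := by
          congr 1
          exact Finset.sum_congr rfl fun k _ => Finset.sum_congr rfl fun j _ => hterm k j
      _ ≤ D * Real.sqrt (∑ j ∈ F, ‖eF (j : ℤ) t • x j‖ ^ 2)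
            * Real.sqrt (∑ k ∈ G, ‖(ContinuousLinearMap.adjoint (g t))
              (eF (k : ℤ) t • y k)‖ ^ 2) := hB F G _ _
      _ ≤ D * X * (‖g t‖ * Y) := by
          rw [hx'eq]
          exact mul_le_mul_of_nonneg_left hy'le (mul_nonneg hD hX0)
      _ = ‖g t‖ * (D * X * Y) := by ring
  calc (2 * π)⁻¹ * ‖∫ t, ∑ k ∈ G, ∑ j ∈ F, q k j t ∂tmu‖
      ≤ (2 * π)⁻¹ * ∫ t, ‖∑ k ∈ G, ∑ j ∈ F, q k j t‖ ∂tmu :=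
        mul_le_mul_of_nonneg_left (norm_integral_le_integral_norm _) (by positivity)
    _ ≤ (2 * π)⁻¹ * ∫ t, ‖g t‖ * (D * X * Y) ∂tmu := by
        refine mul_le_mul_of_nonneg_left ?_ (by positivity)
        exact integral_mono hS_int.norm (hg.norm.mul_const _) hpt
    _ = (2 * π)⁻¹ * ((∫ t, ‖g t‖ ∂tmu) * (D * X * Y)) := by rw [integral_mul_const]
    _ = (2 * π)⁻¹ * (∫ t, ‖g t‖ ∂tmu) * D * X * Y := by ring

lemma toeplitz_right_bound {g : ℝ → (H →L[ℂ] H)} (hg : Integrable g tmu) :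
    MrBoundedBy (fun k j => opFourierCoeff g ((j : ℤ) - (k : ℤ)))
      ((2 * π)⁻¹ * ∫ t, ‖g t‖ ∂tmu) := by
  intro B D hD hB F G x y
  have hX0 : (0:ℝ) ≤ Real.sqrt (∑ j ∈ F, ‖x j‖ ^ 2) := Real.sqrt_nonneg _
  have hY0 : (0:ℝ) ≤ Real.sqrt (∑ k ∈ G, ‖y k‖ ^ 2) := Real.sqrt_nonneg _
  set X := Real.sqrt (∑ j ∈ F, ‖x j‖ ^ 2) with hXdef
  set Y := Real.sqrt (∑ k ∈ G, ‖y k‖ ^ 2) with hYdef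
  set q : ℕ → ℕ → ℝ → ℂ := fun k j t =>
    (inner ℂ (B k j (eF ((j : ℤ) - (k : ℤ)) t • g t (x j))) (y k) : ℂ) with hq
  have hq_int : ∀ k j : ℕ, Integrable (q k j) tmu := fun k j =>
    ((B k j).integrable_comp
      (integrable_eF_smul (hg.apply_continuousLinearMap _) _)).inner_const _
  have key : ∀ k j : ℕ,
      (inner ℂ ((schur B (fun k j => opFourierCoeff g ((j : ℤ) - (k : ℤ)))) k j (x j)) (y k) : ℂ)
        = ((2 * π)⁻¹ : ℝ) • ∫ t, q k j t ∂tmu := by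
    intro k j
    have hint := integrable_eF_smul (μ := tmu) (hg.apply_continuousLinearMap (x j))
      ((j : ℤ) - (k : ℤ))
    have hint2 := (B k j).integrable_comp hint
    show (inner ℂ (B k j (opFourierCoeff g ((j : ℤ) - (k : ℤ)) (x j))) (y k) : ℂ) = _
    rw [opFourierCoeff_apply hg, ContinuousLinearMap.map_smul_of_tower,
      ← ContinuousLinearMap.integral_comp_comm _ hint,
      RCLike.real_smul_eq_coe_smul (K := ℂ), inner_smul_left,
      inner_integral_left hint2, RCLike.conj_ofReal,
      RCLike.real_smul_eq_coe_smul (K := ℂ) ((2 * π)⁻¹ : ℝ), smul_eq_mul]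
  have total : (∑ k ∈ G, ∑ j ∈ F,
        (inner ℂ ((schur B (fun k j => opFourierCoeff g ((j : ℤ) - (k : ℤ)))) k j (x j)) (y k) : ℂ))
      = ((2 * π)⁻¹ : ℝ) • ∫ t, ∑ k ∈ G, ∑ j ∈ F, q k j t ∂tmu := by
    rw [integral_finset_sum _ fun k _ => integrable_finset_sum _ fun j _ => hq_int k j,
      Finset.smul_sum]
    refine Finset.sum_congr rfl fun k _ => ?_
    rw [integral_finset_sum _ fun j _ => hq_int k j, Finset.smul_sum]
    exact Finset.sum_congr rfl fun j _ => key k j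
  rw [total, norm_smul, Real.norm_eq_abs, abs_of_nonneg (by positivity : (0:ℝ) ≤ (2 * π)⁻¹)]
  have hS_int : Integrable (fun t => ∑ k ∈ G, ∑ j ∈ F, q k j t) tmu :=
    integrable_finset_sum _ fun k _ => integrable_finset_sum _ fun j _ => hq_int k j
  have hpt : ∀ t : ℝ, ‖∑ k ∈ G, ∑ j ∈ F, q k j t‖ ≤ ‖g t‖ * (D * X * Y) := by
    intro t
    have hterm : ∀ k j : ℕ, q k j t = (inner ℂ (B k j (eF (j : ℤ) t • g t (x j)))
        (eF (k : ℤ) t • y k) : ℂ) := by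
      intro k j
      have hL : q k j t
          = eF (-((j : ℤ) - (k : ℤ))) t * (inner ℂ (B k j (g t (x j))) (y k) : ℂ) := by
        show (inner ℂ (B k j (eF ((j : ℤ) - (k : ℤ)) t • g t (x j))) (y k) : ℂ) = _
        rw [_root_.map_smul, inner_smul_left, eF_conj]
      have hR : (inner ℂ (B k j (eF (j : ℤ) t • g t (x j))) (eF (k : ℤ) t • y k) : ℂ)
          = eF (-(j : ℤ)) t * (eF (k : ℤ) t * (inner ℂ (B k j (g t (x j))) (y k) : ℂ)) := by
        rw [_root_.map_smul, inner_smul_left, eF_conj, inner_smul_right]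
      rw [hL, hR, ← mul_assoc, eF_mul]
      have harg : (-(j : ℤ) + (k : ℤ)) = -((j : ℤ) - (k : ℤ)) := by ring
      rw [harg]
    have hy'eq : Real.sqrt (∑ k ∈ G, ‖eF (k : ℤ) t • y k‖ ^ 2) = Y := by
      rw [hYdef]
      congr 1
      exact Finset.sum_congr rfl fun k _ => by rw [norm_smul, eF_norm, one_mul]
    have hx'le : Real.sqrt (∑ j ∈ F, ‖eF (j : ℤ) t • g t (x j)‖ ^ 2) ≤ ‖g t‖ * X := by
      have h1 : ∑ j ∈ F, ‖eF (j : ℤ) t • g t (x j)‖ ^ 2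
          ≤ ∑ j ∈ F, (‖g t‖ * ‖x j‖) ^ 2 := by
        refine Finset.sum_le_sum fun j _ => ?_
        refine pow_le_pow_left₀ (norm_nonneg _) ?_ 2
        rw [norm_smul, eF_norm, one_mul]
        exact ContinuousLinearMap.le_opNorm _ _
      refine le_trans (Real.sqrt_le_sqrt h1) ?_
      have h2 : ∑ j ∈ F, (‖g t‖ * ‖x j‖) ^ 2 = ‖g t‖ ^ 2 * ∑ j ∈ F, ‖x j‖ ^ 2 := by
        rw [Finset.mul_sum]; exact Finset.sum_congr rfl fun j _ => by ring
      rw [h2, Real.sqrt_mul (sq_nonneg _), Real.sqrt_sq (norm_nonneg _), hXdef]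
    calc ‖∑ k ∈ G, ∑ j ∈ F, q k j t‖
        = ‖∑ k ∈ G, ∑ j ∈ F, (inner ℂ (B k j (eF (j : ℤ) t • g t (x j)))
            (eF (k : ℤ) t • y k) : ℂ)‖ := by
          congr 1
          exact Finset.sum_congr rfl fun k _ => Finset.sum_congr rfl fun j _ => hterm k j
      _ ≤ D * Real.sqrt (∑ j ∈ F, ‖eF (j : ℤ) t • g t (x j)‖ ^ 2)
            * Real.sqrt (∑ k ∈ G, ‖eF (k : ℤ) t • y k‖ ^ 2) := hB F G _ _
      _ ≤ D * (‖g t‖ * X) * Y := by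
          rw [hy'eq]
          exact mul_le_mul_of_nonneg_right (mul_le_mul_of_nonneg_left hx'le hD) hY0
      _ = ‖g t‖ * (D * X * Y) := by ring
  calc (2 * π)⁻¹ * ‖∫ t, ∑ k ∈ G, ∑ j ∈ F, q k j t ∂tmu‖
      ≤ (2 * π)⁻¹ * ∫ t, ‖∑ k ∈ G, ∑ j ∈ F, q k j t‖ ∂tmu :=
        mul_le_mul_of_nonneg_left (norm_integral_le_integral_norm _) (by positivity)
    _ ≤ (2 * π)⁻¹ * ∫ t, ‖g t‖ * (D * X * Y) ∂tmu := by
        refine mul_le_mul_of_nonneg_left ?_ (by positivity)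
        exact integral_mono hS_int.norm (hg.norm.mul_const _) hpt
    _ = (2 * π)⁻¹ * ((∫ t, ‖g t‖ ∂tmu) * (D * X * Y)) := by rw [integral_mul_const]
    _ = (2 * π)⁻¹ * (∫ t, ‖g t‖ ∂tmu) * D * X * Y := by ring

lemma scalar_trig_dense {u : ℝ → ℂ} (hum : Measurable u) (hu : Integrable u tmu)
    {ε : ℝ} (hε : 0 < ε) :
    ∃ (s : Finset ℤ) (a : ℤ → ℂ), ∫ t, ‖u t - ∑ n ∈ s, a n * eF n t‖ ∂tmu < ε := by
  haveI hT : Fact (0 < 2 * π) := ⟨by positivity⟩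
  set U : AddCircle (2 * π) → ℂ := AddCircle.liftIoc (2 * π) (-π) u with hU
  have hIoc : Ioc (-π) (-π + 2 * π) = Ioc (-π) π := by rw [show -π + 2 * π = π by ring]
  have hUm : Measurable U := by
    have h : U = (fun y : Ioc (-π) (-π + 2 * π) => u ↑y)
        ∘ (AddCircle.measurableEquivIoc (2 * π) (-π)) := rfl
    rw [h]
    exact (hum.comp measurable_subtype_coe).comp
      (AddCircle.measurableEquivIoc (2 * π) (-π)).measurable
  have hmp : MeasurePreserving ((↑) : ℝ → AddCircle (2 * π)) tmu volume := by
    have h := AddCircle.measurePreserving_mk (2 * π) (-π)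
    rw [hIoc] at h
    exact h
  have hUmk : ∀ t ∈ Ioc (-π) π, U ↑t = u t := by
    intro t ht
    exact AddCircle.liftIoc_coe_apply (by rwa [hIoc])
  have hae : (fun t => U ↑t) =ᵐ[tmu] u := by
    have h : ∀ᵐ (t : ℝ) ∂(volume.restrict (Ioc (-π) π)), U ↑t = u t :=
      (ae_restrict_iff' measurableSet_Ioc).mpr (ae_of_all _ hUmk)
    exact h
  have hUint : Integrable U volume := by
    refine (hmp.integrable_comp hUm.aestronglyMeasurable).mp ?_
    exact hu.congr hae.symm
  have hUhaar : Integrable U (AddCircle.haarAddCircle) := by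
    rw [AddCircle.volume_eq_smul_haarAddCircle] at hUint
    exact (integrable_smul_measure (ne_of_gt (ENNReal.ofReal_pos.mpr hT.out))
      ENNReal.ofReal_ne_top).mp hUint
  have hmem : MemLp U 1 AddCircle.haarAddCircle := memLp_one_iff_integrable.mpr hUhaar
  set δ := ε / (2 * π + 1) with hδ
  have hδ0 : 0 < δ := by positivity
  have hcl : hmem.toLp U ∈ closure
      ((Submodule.span ℂ (Set.range (@fourierLp (2 * π) _ 1 _)) : Submodule ℂ (Lp ℂ 1 AddCircle.haarAddCircle)) : Set (Lp ℂ 1 AddCircle.haarAddCircle)) := by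
    have hdense := span_fourierLp_closure_eq_top (T := 2 * π) (p := 1) (by norm_num)
    rw [← Submodule.topologicalClosure_coe, hdense]
    trivial
  obtain ⟨v, hvS, hvdist⟩ := Metric.mem_closure_iff.mp hcl δ hδ0
  rw [SetLike.mem_coe, Finsupp.mem_span_range_iff_exists_finsupp] at hvS
  obtain ⟨c, hc⟩ := hvS
  set qC : C(AddCircle (2 * π), ℂ) := c.sum fun n a => a • fourier n with hqC
  have hv : v = ContinuousMap.toLp (E := ℂ) 1 AddCircle.haarAddCircle ℂ qC := by
    rw [← hc, hqC, map_finsuppSum]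
    exact Finsupp.sum_congr fun n _ => by rw [_root_.map_smul]
  have hdist2 : ∫ x, ‖U x - qC x‖ ∂AddCircle.haarAddCircle < δ := by
    have h1 : dist (hmem.toLp U) (ContinuousMap.toLp (E := ℂ) 1 AddCircle.haarAddCircle ℂ qC)
        = ∫ x, ‖U x - qC x‖ ∂AddCircle.haarAddCircle := by
      rw [MeasureTheory.L1.dist_eq_integral_dist]
      refine integral_congr_ae ?_
      filter_upwards [hmem.coeFn_toLp, ContinuousMap.coeFn_toLp
        (p := (1 : ENNReal)) (μ := AddCircle.haarAddCircle) (𝕜 := ℂ) qC] with x h1 h2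
      rw [h1, h2, dist_eq_norm]
    rw [← h1]
    rw [hv] at hvdist
    exact hvdist
  have hvol : ∫ x, ‖U x - qC x‖ ∂(volume : Measure (AddCircle (2 * π))) < 2 * π * δ := by
    rw [AddCircle.volume_eq_smul_haarAddCircle, integral_smul_measure,
      ENNReal.toReal_ofReal (by positivity : (0:ℝ) ≤ 2 * π), smul_eq_mul]
    exact mul_lt_mul_of_pos_left hdist2 (by positivity)
  have hpull : ∫ t, ‖U ↑t - qC ↑t‖ ∂tmu
      = ∫ x, ‖U x - qC x‖ ∂(volume : Measure (AddCircle (2 * π))) := by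
    rw [← hmp.map_eq, integral_map (AddCircle.measurable_mk'.aemeasurable)
      (show AEStronglyMeasurable (fun x => ‖U x - qC x‖) _ from
        ((hUm.sub qC.continuous.measurable).norm).aestronglyMeasurable)]
  have hquC : ∫ t, ‖u t - qC ↑t‖ ∂tmu < 2 * π * δ := by
    refine lt_of_le_of_lt (le_of_eq ?_) (hpull ▸ hvol)
    refine integral_congr_ae ?_
    filter_upwards [hae] with t ht
    rw [ht]
  refine ⟨c.support.image (fun n => -n), fun m => c (-m), ?_⟩
  have hfinal : ∀ t : ℝ, (∑ m ∈ c.support.image (fun n => -n), c (-m) * eF m t) = qC ↑t := by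
    intro t
    have h1 : qC ↑t = ∑ n ∈ c.support, c n * Complex.exp ((n : ℂ) * (t : ℂ) * Complex.I) := by
      rw [hqC]
      have h2 : (c.sum fun n a => a • fourier n : C(AddCircle (2 * π), ℂ))
          = ∑ n ∈ c.support, c n • fourier n := rfl
      rw [h2]
      simp only [ContinuousMap.coe_sum, Finset.sum_apply, ContinuousMap.coe_smul,
        Pi.smul_apply, smul_eq_mul]
      refine Finset.sum_congr rfl fun n _ => ?_
      congr 1
      rw [fourier_coe_apply]
      congr 1
      have hπ : (π : ℂ) ≠ 0 := Complex.ofReal_ne_zero.mpr pi_ne_zero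
      push_cast
      field_simp
    rw [h1, show (∑ m ∈ c.support.image (fun n => -n), c (-m) * eF m t)
        = ∑ n ∈ c.support, c (-(-n)) * eF (-n) t from
      Finset.sum_image (fun a _ b _ h => neg_injective h)]
    refine Finset.sum_congr rfl fun n _ => ?_
    rw [neg_neg]
    congr 1
    rw [eF]
    congr 1
    push_cast
    ring
  calc ∫ t, ‖u t - ∑ m ∈ c.support.image (fun n => -n), c (-m) * eF m t‖ ∂tmu
      = ∫ t, ‖u t - qC ↑t‖ ∂tmu := by
        refine integral_congr_ae (ae_of_all _ fun t => ?_)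
        simp only [hfinal t]
    _ < 2 * π * δ := hquC
    _ < ε := by
        rw [hδ, mul_comm, div_mul_eq_mul_div, div_lt_iff₀ (by positivity)]
        nlinarith [pi_pos, hε]

lemma vec_trig_dense :
    ∀ ⦃h : ℝ → (H →L[ℂ] H)⦄, Integrable h tmu →
      ∀ ε : ℝ, 0 < ε → ∃ (s : Finset ℤ) (b : ℤ → (H →L[ℂ] H)),
        ∫ t, ‖h t - ∑ n ∈ s, eF n t • b n‖ ∂tmu < ε := by
  refine Integrable.induction (μ := tmu)
    (P := fun h => ∀ ε : ℝ, 0 < ε → ∃ (s : Finset ℤ) (b : ℤ → (H →L[ℂ] H)),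
      ∫ t, ‖h t - ∑ n ∈ s, eF n t • b n‖ ∂tmu < ε) ?_ ?_ ?_ ?_
  · intro c s hs hμs ε hε
    have hχm : Measurable (Set.indicator s fun _ => (1 : ℂ)) := measurable_const.indicator hs
    have hχi : Integrable (Set.indicator s fun _ => (1 : ℂ)) tmu :=
      (integrable_const _).indicator hs
    obtain ⟨s', a, ha⟩ := scalar_trig_dense hχm hχi (show 0 < ε / (‖c‖ + 1) by positivity)
    refine ⟨s', fun n => a n • c, ?_⟩
    have hpt : ∀ t : ℝ, ‖Set.indicator s (fun _ => c) t - ∑ n ∈ s', eF n t • a n • c‖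
        = ‖Set.indicator s (fun _ => (1 : ℂ)) t - ∑ n ∈ s', a n * eF n t‖ * ‖c‖ := by
      intro t
      have h1 : Set.indicator s (fun _ => c) t = Set.indicator s (fun _ => (1 : ℂ)) t • c := by
        by_cases ht : t ∈ s <;> simp [ht]
      have h2 : (∑ n ∈ s', eF n t • a n • c) = (∑ n ∈ s', a n * eF n t) • c := by
        rw [Finset.sum_smul]
        refine Finset.sum_congr rfl fun n _ => ?_
        rw [smul_smul, mul_comm]
      rw [h1, h2, ← sub_smul, norm_smul]
    calc ∫ t, ‖Set.indicator s (fun _ => c) t - ∑ n ∈ s', eF n t • a n • c‖ ∂tmu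
        = (∫ t, ‖Set.indicator s (fun _ => (1 : ℂ)) t - ∑ n ∈ s', a n * eF n t‖ ∂tmu) * ‖c‖ := by
          simp_rw [hpt]
          rw [integral_mul_const]
      _ ≤ (ε / (‖c‖ + 1)) * ‖c‖ := mul_le_mul_of_nonneg_right ha.le (norm_nonneg c)
      _ < ε := by
          rw [div_mul_eq_mul_div, div_lt_iff₀ (by positivity)]
          nlinarith [norm_nonneg c, hε]
  · intro f g _ hfi hgi Pf Pg ε hε
    obtain ⟨s1, b1, h1⟩ := Pf (ε / 2) (by positivity)
    obtain ⟨s2, b2, h2⟩ := Pg (ε / 2) (by positivity)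
    refine ⟨s1 ∪ s2, fun n => (if n ∈ s1 then b1 n else 0) + (if n ∈ s2 then b2 n else 0), ?_⟩
    have hsplit : ∀ t : ℝ,
        (∑ n ∈ s1 ∪ s2, eF n t • ((if n ∈ s1 then b1 n else 0) + (if n ∈ s2 then b2 n else 0)))
          = (∑ n ∈ s1, eF n t • b1 n) + (∑ n ∈ s2, eF n t • b2 n) := by
      intro t
      have e1 : ∀ (s' : Finset ℤ) (b : ℤ → (H →L[ℂ] H)),
          (∑ n ∈ s1 ∪ s2, eF n t • (if n ∈ s' then b n else 0))
            = ∑ n ∈ (s1 ∪ s2) ∩ s', eF n t • b n := by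
        intro s' b
        rw [← Finset.sum_ite_mem]
        refine Finset.sum_congr rfl fun n _ => ?_
        split_ifs <;> simp
      simp_rw [smul_add, Finset.sum_add_distrib, e1]
      rw [Finset.union_inter_cancel_left, Finset.union_inter_cancel_right]
    have hptt : ∀ t : ℝ, (f + g) t
          - (∑ n ∈ s1 ∪ s2, eF n t • ((if n ∈ s1 then b1 n else 0) + (if n ∈ s2 then b2 n else 0)))
        = (f t - ∑ n ∈ s1, eF n t • b1 n) + (g t - ∑ n ∈ s2, eF n t • b2 n) := by
      intro t
      rw [hsplit]
      simp only [Pi.add_apply]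
      abel
    calc ∫ t, ‖(f + g) t - ∑ n ∈ s1 ∪ s2,
            eF n t • ((if n ∈ s1 then b1 n else 0) + (if n ∈ s2 then b2 n else 0))‖ ∂tmu
        ≤ ∫ t, (‖f t - ∑ n ∈ s1, eF n t • b1 n‖ + ‖g t - ∑ n ∈ s2, eF n t • b2 n‖) ∂tmu := by
          refine integral_mono_of_nonneg (ae_of_all _ fun t => norm_nonneg _)
            (((hfi.sub (trig_integrable s1 b1)).norm).add
              ((hgi.sub (trig_integrable s2 b2)).norm)) (ae_of_all _ fun t => ?_)
          have hna := norm_add_le (f t - ∑ n ∈ s1, eF n t • b1 n)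
            (g t - ∑ n ∈ s2, eF n t • b2 n)
          rw [← hptt t] at hna
          exact hna
      _ = (∫ t, ‖f t - ∑ n ∈ s1, eF n t • b1 n‖ ∂tmu)
            + ∫ t, ‖g t - ∑ n ∈ s2, eF n t • b2 n‖ ∂tmu :=
          integral_add ((hfi.sub (trig_integrable s1 b1)).norm)
            ((hgi.sub (trig_integrable s2 b2)).norm)
      _ < ε / 2 + ε / 2 := add_lt_add h1 h2
      _ = ε := add_halves ε
  · refine isClosed_of_closure_subset fun φ hφ => ?_
    intro ε hε
    obtain ⟨ψ, hψS, hdist⟩ := Metric.mem_closure_iff.mp hφ (ε / 2) (by positivity)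
    obtain ⟨s, b, hb⟩ := hψS (ε / 2) (by positivity)
    refine ⟨s, b, ?_⟩
    have hφψ : ∫ t, ‖(φ : ℝ → (H →L[ℂ] H)) t - (ψ : ℝ → (H →L[ℂ] H)) t‖ ∂tmu = dist φ ψ := by
      rw [MeasureTheory.L1.dist_eq_integral_dist]
      refine integral_congr_ae (ae_of_all _ fun t => ?_)
      show ‖(φ : ℝ → (H →L[ℂ] H)) t - (ψ : ℝ → (H →L[ℂ] H)) t‖
        = dist ((φ : ℝ → (H →L[ℂ] H)) t) ((ψ : ℝ → (H →L[ℂ] H)) t)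
      rw [dist_eq_norm]
    calc ∫ t, ‖(φ : ℝ → (H →L[ℂ] H)) t - ∑ n ∈ s, eF n t • b n‖ ∂tmu
        ≤ ∫ t, (‖(φ : ℝ → (H →L[ℂ] H)) t - (ψ : ℝ → (H →L[ℂ] H)) t‖
            + ‖(ψ : ℝ → (H →L[ℂ] H)) t - ∑ n ∈ s, eF n t • b n‖) ∂tmu := by
          refine integral_mono_of_nonneg (ae_of_all _ fun t => norm_nonneg _)
            ((((L1.integrable_coeFn φ).sub (L1.integrable_coeFn ψ)).norm).add
              (((L1.integrable_coeFn ψ).sub (trig_integrable s b)).norm))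
            (ae_of_all _ fun t => ?_)
          simpa [dist_eq_norm] using dist_triangle ((φ : ℝ → (H →L[ℂ] H)) t)
            ((ψ : ℝ → (H →L[ℂ] H)) t) (∑ n ∈ s, eF n t • b n)
      _ = (∫ t, ‖(φ : ℝ → (H →L[ℂ] H)) t - (ψ : ℝ → (H →L[ℂ] H)) t‖ ∂tmu)
            + ∫ t, ‖(ψ : ℝ → (H →L[ℂ] H)) t - ∑ n ∈ s, eF n t • b n‖ ∂tmu :=
          integral_add (((L1.integrable_coeFn φ).sub (L1.integrable_coeFn ψ)).norm)
            (((L1.integrable_coeFn ψ).sub (trig_integrable s b)).norm)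
      _ < ε / 2 + ε / 2 := add_lt_add (hφψ ▸ hdist) hb
      _ = ε := add_halves ε
  · intro f g hfg _ Pf ε hε
    obtain ⟨s, b, hb⟩ := Pf ε hε
    refine ⟨s, b, ?_⟩
    refine lt_of_le_of_lt (le_of_eq (integral_congr_ae ?_)) hb
    filter_upwards [hfg] with t ht
    rw [ht]

lemma trig_coeff_eq_zero (s : Finset ℤ) (b : ℤ → (H →L[ℂ] H)) {l : ℤ}
    (hl : ∀ n ∈ s, l + n ≠ 0) :
    opFourierCoeff (fun t => ∑ n ∈ s, eF n t • b n) l = 0 := by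
  rw [opFourierCoeff]
  have hrw : Set.EqOn
      (fun t : ℝ => Complex.exp (-(l : ℂ) * (t : ℝ) * Complex.I) • ∑ n ∈ s, eF n t • b n)
      (fun t : ℝ => ∑ n ∈ s, eF (l + n) t • b n) (Set.uIcc (-π) π) := by
    intro t _
    show eF l t • ∑ n ∈ s, eF n t • b n = _
    rw [Finset.smul_sum]
    exact Finset.sum_congr rfl fun n _ => by rw [smul_smul, eF_mul]
  rw [intervalIntegral.integral_congr hrw,
    intervalIntegral.integral_finset_sum fun n _ =>
      (show IntervalIntegrable (fun t => eF (l + n) t • b n) _ _ _ from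
        ((eF_continuous (l + n)).smul continuous_const).intervalIntegrable _ _)]
  have hz : ∀ n ∈ s, (∫ t in (-π)..π, eF (l + n) t • b n) = 0 := by
    intro n hn
    rw [intervalIntegral.integral_smul_const]
    have hc : (-((l + n : ℤ) : ℂ)) * Complex.I ≠ 0 :=
      mul_ne_zero (neg_ne_zero.mpr (Int.cast_ne_zero.mpr (hl n hn))) Complex.I_ne_zero
    have harg : Set.EqOn (fun t : ℝ => eF (l + n) t)
        (fun t : ℝ => Complex.exp ((-((l + n : ℤ) : ℂ) * Complex.I) * (t : ℝ)))
        (Set.uIcc (-π) π) := by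
      intro t _
      show Complex.exp _ = Complex.exp _
      congr 1
      push_cast
      ring
    have hzero : Complex.exp (-((l + n : ℤ) : ℂ) * Complex.I * ((π : ℝ) : ℂ))
        - Complex.exp (-((l + n : ℤ) : ℂ) * Complex.I * ((-π : ℝ) : ℂ)) = 0 := by
      rw [sub_eq_zero, Complex.exp_eq_exp_iff_exists_int]
      exact ⟨-(l + n), by push_cast; ring⟩
    rw [intervalIntegral.integral_congr harg, integral_exp_mul_complex hc, hzero, zero_div,
      zero_smul]
  rw [Finset.sum_eq_zero hz, smul_zero]

end ToeplitzAux

open Real in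
/-- If `f ∈ L¹(𝕋, B(H))`, the Toeplitz matrix `A_f = (\hat{f}(j−k))` is a two-sided Schur
multiplier with `‖A_f‖_{M(ℓ²(H))} ≤ ‖f‖_{L¹(𝕋,B(H))}`, and moreover `A_f ∈ L¹(ℓ²(H))`. -/
theorem toeplitz_of_L1_function (f : ℝ → (H →L[ℂ] H))
    (hf : IntervalIntegrable f MeasureTheory.volume (-π) π) :
    MlBoundedBy (fun k j => opFourierCoeff f ((j : ℤ) - (k : ℤ)))
        ((2 * π)⁻¹ * ∫ t in (-π)..π, ‖f t‖) ∧
      MrBoundedBy (fun k j => opFourierCoeff f ((j : ℤ) - (k : ℤ)))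
        ((2 * π)⁻¹ * ∫ t in (-π)..π, ‖f t‖) ∧
      MemL1l (fun k j => opFourierCoeff f ((j : ℤ) - (k : ℤ))) ∧
      MemL1r (fun k j => opFourierCoeff f ((j : ℤ) - (k : ℤ))) := by
  classical
  have hf' : MeasureTheory.Integrable f tmu :=
    (intervalIntegrable_iff_integrableOn_Ioc_of_le pi_interval_le).mp hf
  have hC : ((2 * π)⁻¹ * ∫ t in (-π)..π, ‖f t‖) = (2 * π)⁻¹ * ∫ t, ‖f t‖ ∂tmu := by
    rw [intervalIntegral.integral_of_le pi_interval_le]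
    rfl
  have hC0 : 0 ≤ (2 * π)⁻¹ * ∫ t in (-π)..π, ‖f t‖ := by
    rw [hC]
    exact mul_nonneg (by positivity)
      (MeasureTheory.integral_nonneg fun t => norm_nonneg _)
  have hl : MlBoundedBy (fun k j => opFourierCoeff f ((j : ℤ) - (k : ℤ)))
      ((2 * π)⁻¹ * ∫ t in (-π)..π, ‖f t‖) := by
    rw [hC]; exact toeplitz_left_bound hf'
  have hr : MrBoundedBy (fun k j => opFourierCoeff f ((j : ℤ) - (k : ℤ)))
      ((2 * π)⁻¹ * ∫ t in (-π)..π, ‖f t‖) := by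
    rw [hC]; exact toeplitz_right_bound hf'
  -- common approximation construction
  have happrox : ∀ ε : ℝ, 0 < ε → ∃ P : ℕ → ℕ → (H →L[ℂ] H), IsMatPoly P ∧
      MlBoundedBy (fun k j => opFourierCoeff f ((j : ℤ) - (k : ℤ)) - P k j) ε ∧
      MrBoundedBy (fun k j => opFourierCoeff f ((j : ℤ) - (k : ℤ)) - P k j) ε := by
    intro ε hε
    obtain ⟨s, b, hb⟩ := vec_trig_dense hf' ε hε
    refine ⟨fun k j => opFourierCoeff (fun t => ∑ n ∈ s, eF n t • b n) ((j : ℤ) - (k : ℤ)),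
      ⟨⟨s.sup Int.natAbs, fun k j hNlt => ?_⟩,
        ⟨(2 * π)⁻¹ * ∫ t, ‖∑ n ∈ s, eF n t • b n‖ ∂tmu,
          fun k j => opFourierCoeff_norm_le _ _⟩⟩, ?_, ?_⟩
    · refine trig_coeff_eq_zero s b fun n hn h0 => ?_
      have h1 : n.natAbs ≤ s.sup Int.natAbs := Finset.le_sup hn
      have h2 : n = -((j : ℤ) - (k : ℤ)) := by omega
      rw [h2, Int.natAbs_neg] at h1
      omega
    case _ =>
      have heq2 : (fun k j : ℕ => opFourierCoeff f ((j : ℤ) - (k : ℤ))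
            - opFourierCoeff (fun t => ∑ n ∈ s, eF n t • b n) ((j : ℤ) - (k : ℤ)))
          = fun k j : ℕ =>
            opFourierCoeff (fun t => f t - ∑ n ∈ s, eF n t • b n) ((j : ℤ) - (k : ℤ)) := by
        funext k j
        exact (opFourierCoeff_sub hf' (trig_integrable s b) _).symm
      have hCle : (2 * π)⁻¹ * ∫ t, ‖f t - ∑ n ∈ s, eF n t • b n‖ ∂tmu ≤ ε := by
        calc (2 * π)⁻¹ * ∫ t, ‖f t - ∑ n ∈ s, eF n t • b n‖ ∂tmu
            ≤ 1 * ∫ t, ‖f t - ∑ n ∈ s, eF n t • b n‖ ∂tmu := by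
              refine mul_le_mul_of_nonneg_right ?_
                (MeasureTheory.integral_nonneg fun t => norm_nonneg _)
              refine inv_le_one_of_one_le₀ ?_
              nlinarith [Real.pi_gt_three]
          _ = ∫ t, ‖f t - ∑ n ∈ s, eF n t • b n‖ ∂tmu := one_mul _
          _ ≤ ε := hb.le
      have hMl : MlBoundedBy (fun k j : ℕ => opFourierCoeff f ((j : ℤ) - (k : ℤ))
          - opFourierCoeff (fun t => ∑ n ∈ s, eF n t • b n) ((j : ℤ) - (k : ℤ))) ε := by
        rw [heq2]
        exact mlBoundedBy_mono (toeplitz_left_bound (hf'.sub (trig_integrable s b))) hCle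
      exact hMl
    case _ =>
      have heq2 : (fun k j : ℕ => opFourierCoeff f ((j : ℤ) - (k : ℤ))
            - opFourierCoeff (fun t => ∑ n ∈ s, eF n t • b n) ((j : ℤ) - (k : ℤ)))
          = fun k j : ℕ =>
            opFourierCoeff (fun t => f t - ∑ n ∈ s, eF n t • b n) ((j : ℤ) - (k : ℤ)) := by
        funext k j
        exact (opFourierCoeff_sub hf' (trig_integrable s b) _).symm
      have hCle : (2 * π)⁻¹ * ∫ t, ‖f t - ∑ n ∈ s, eF n t • b n‖ ∂tmu ≤ ε := by
        calc (2 * π)⁻¹ * ∫ t, ‖f t - ∑ n ∈ s, eF n t • b n‖ ∂tmu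
            ≤ 1 * ∫ t, ‖f t - ∑ n ∈ s, eF n t • b n‖ ∂tmu := by
              refine mul_le_mul_of_nonneg_right ?_
                (MeasureTheory.integral_nonneg fun t => norm_nonneg _)
              refine inv_le_one_of_one_le₀ ?_
              nlinarith [Real.pi_gt_three]
          _ = ∫ t, ‖f t - ∑ n ∈ s, eF n t • b n‖ ∂tmu := one_mul _
          _ ≤ ε := hb.le
      have hMr : MrBoundedBy (fun k j : ℕ => opFourierCoeff f ((j : ℤ) - (k : ℤ))
          - opFourierCoeff (fun t => ∑ n ∈ s, eF n t • b n) ((j : ℤ) - (k : ℤ))) ε := by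
        rw [heq2]
        exact mrBoundedBy_mono (toeplitz_right_bound (hf'.sub (trig_integrable s b))) hCle
      exact hMr
  refine ⟨hl, hr, ⟨⟨_, hC0, hl⟩, ?_⟩, ⟨⟨_, hC0, hr⟩, ?_⟩⟩
  · intro ε hε
    obtain ⟨P, hP, hPl, _⟩ := happrox ε hε
    exact ⟨P, hP, hPl⟩
  · intro ε hε
    obtain ⟨P, hP, _, hPr⟩ := happrox ε hε
    exact ⟨P, hP, hPr⟩
end
end

section
/- Let P(t) = ∑_{l} T_l e^{ilt} be a B(H)-valued trigonometric polynomial (T_l ∈ B(H), finitely many nonzero) and let A_P be the Toeplitz matrix (T_{j−k}). Then sup_{‖x‖=1} (1/2π)∫₀^{2π} ‖∑_l T_l(x)e^{ilt}‖ dt ≤ ‖A_P‖_{M_r(ℓ²(H))}. -/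
open Finset Filter

noncomputable section

variable {H : Type*} [NormedAddCommGroup H] [InnerProductSpace ℂ H]
  [CompleteSpace H] [TopologicalSpace.SeparableSpace H]

section SOTAuxiliary

open Real intervalIntegral

private lemma integral_exp_int (m : ℤ) :
    (∫ t in (-π:ℝ)..π, Complex.exp ((m:ℂ) * t * Complex.I)) = if m = 0 then (2*π:ℂ) else 0 := by
  rcases eq_or_ne m 0 with h | h
  · simp only [h, Int.cast_zero, zero_mul, Complex.exp_zero, if_pos, integral_const]
    rw [sub_neg_eq_add, Complex.real_smul]
    push_cast
    ring
  · have hc : (m:ℂ) * Complex.I ≠ 0 := by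
      simp [Complex.ext_iff, Complex.I_ne_zero, h]
    have : ∀ t : ℝ, (m:ℂ) * t * Complex.I = ((m:ℂ) * Complex.I) * t := by intro t; ring
    simp only [this]
    rw [integral_exp_mul_complex hc, if_neg h]
    have h1 : Complex.exp ((m:ℂ) * Complex.I * π) = ((-1:ℂ))^m := by
      rw [show (m:ℂ) * Complex.I * π = (m:ℤ) * (π * Complex.I) by push_cast; ring,
        Complex.exp_int_mul, Complex.exp_pi_mul_I]
    have h2 : Complex.exp ((m:ℂ) * Complex.I * (-π:ℝ)) = ((-1:ℂ))^(-m) := by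
      rw [show (m:ℂ) * Complex.I * ((-π:ℝ):ℂ) = (-m:ℤ) * (π * Complex.I) by push_cast; ring,
        Complex.exp_int_mul, Complex.exp_pi_mul_I]
    rw [h1, h2, zpow_neg, div_eq_zero_iff]
    left
    rw [sub_eq_zero]
    rcases Int.even_or_odd m with he | ho
    · rw [he.neg_one_zpow]; norm_num
    · rw [ho.neg_one_zpow]; norm_num

private lemma parseval (F : Finset ℕ) (x : ℕ → H) :
    (∫ t in (-π:ℝ)..π, ‖∑ j ∈ F, Complex.exp (-(j:ℂ) * t * Complex.I) • x j‖^2)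
      = 2*π*∑ j ∈ F, ‖x j‖^2 := by
  have hce : ∀ (c : ℂ), Continuous fun t : ℝ => Complex.exp (c * t * Complex.I) := by
    intro c; fun_prop
  have key : ∀ t : ℝ, (‖∑ j ∈ F, Complex.exp (-(j:ℂ) * t * Complex.I) • x j‖^2 : ℝ)
      = Complex.re (∑ j ∈ F, ∑ j' ∈ F,
          Complex.exp (((j - j' : ℤ) : ℂ) * t * Complex.I) * (inner ℂ (x j) (x j') : ℂ)) := by
    intro t
    have hSS : ((inner ℂ (∑ j ∈ F, Complex.exp (-(j:ℂ) * t * Complex.I) • x j)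
        (∑ j' ∈ F, Complex.exp (-(j':ℂ) * t * Complex.I) • x j')) : ℂ)
        = ∑ j ∈ F, ∑ j' ∈ F,
          Complex.exp (((j - j' : ℤ) : ℂ) * t * Complex.I) * (inner ℂ (x j) (x j') : ℂ) := by
      rw [sum_inner]
      refine Finset.sum_congr rfl fun j _ => ?_
      rw [inner_sum]
      refine Finset.sum_congr rfl fun j' _ => ?_
      rw [inner_smul_left, inner_smul_right, ← Complex.exp_conj, ← mul_assoc, ← Complex.exp_add]
      congr 2
      push_cast
      simp only [map_mul, map_neg, Complex.conj_I, Complex.conj_ofReal, map_natCast]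
      ring
    rw [← inner_self_eq_norm_sq (𝕜 := ℂ), hSS]
    rfl
  have hint : ∀ j j' : ℕ, IntervalIntegrable
      (fun t : ℝ => Complex.exp (((j - j' : ℤ) : ℂ) * t * Complex.I) * (inner ℂ (x j) (x j') : ℂ))
      MeasureTheory.volume (-π) π :=
    fun j j' => (((hce _)).mul continuous_const).intervalIntegrable _ _
  calc (∫ t in (-π:ℝ)..π, ‖∑ j ∈ F, Complex.exp (-(j:ℂ) * t * Complex.I) • x j‖^2)
      = ∫ t in (-π:ℝ)..π, Complex.re (∑ j ∈ F, ∑ j' ∈ F,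
          Complex.exp (((j - j' : ℤ) : ℂ) * t * Complex.I) * (inner ℂ (x j) (x j') : ℂ)) := by
        simp only [key]
    _ = Complex.re (∫ t in (-π:ℝ)..π, ∑ j ∈ F, ∑ j' ∈ F,
          Complex.exp (((j - j' : ℤ) : ℂ) * t * Complex.I) * (inner ℂ (x j) (x j') : ℂ)) := by
        exact Complex.reCLM.intervalIntegral_comp_comm
          ((continuous_finset_sum _ fun j _ => continuous_finset_sum _ fun j' _ =>
            (hce _).mul continuous_const).intervalIntegrable _ _)
    _ = 2*π*∑ j ∈ F, ‖x j‖^2 := by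
        rw [integral_finset_sum (f := fun (j : ℕ) (t : ℝ) => ∑ j' ∈ F,
            Complex.exp (((j - j' : ℤ) : ℂ) * t * Complex.I) * (inner ℂ (x j) (x j') : ℂ))
          (fun j _ => ((continuous_finset_sum _ fun j' _ =>
          (hce _).mul continuous_const).intervalIntegrable _ _ :
            IntervalIntegrable _ MeasureTheory.volume (-π) π))]
        have h1 : ∀ j ∈ F, (∫ t in (-π:ℝ)..π, ∑ j' ∈ F,
            Complex.exp (((j - j' : ℤ) : ℂ) * t * Complex.I) * (inner ℂ (x j) (x j') : ℂ))
            = 2*π*(inner ℂ (x j) (x j) : ℂ) := by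
          intro j hj
          rw [integral_finset_sum (fun j' _ => hint j j')]
          have h2 : ∀ j' ∈ F, (∫ t in (-π:ℝ)..π,
              Complex.exp (((j - j' : ℤ) : ℂ) * t * Complex.I) * (inner ℂ (x j) (x j') : ℂ))
              = if j' = j then 2*π*(inner ℂ (x j) (x j') : ℂ) else 0 := by
            intro j' _
            rw [integral_mul_const, integral_exp_int]
            by_cases h : j' = j
            · simp [h, mul_assoc]
            · have hne : (j - j' : ℤ) ≠ 0 := by omega
              rw [if_neg hne, if_neg h, zero_mul]
          rw [Finset.sum_congr rfl h2,
            Finset.sum_ite_eq' F j (fun j' => 2*π*(inner ℂ (x j) (x j') : ℂ)), if_pos hj]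
        rw [Finset.sum_congr rfl h1, Complex.re_sum, Finset.mul_sum]
        refine Finset.sum_congr rfl fun j _ => ?_
        simp [Complex.mul_re, ← Complex.ofReal_ofNat]
        rw [← Complex.ofReal_pow, Complex.ofReal_re]

private lemma cs_integral {f g : ℝ → ℝ} (hf : Continuous f) (hg : Continuous g) :
    (∫ t in (-π:ℝ)..π, f t * g t) ≤
      Real.sqrt (∫ t in (-π:ℝ)..π, f t^2) * Real.sqrt (∫ t in (-π:ℝ)..π, g t^2) := by
  have hab : (-π:ℝ) ≤ π := by linarith [pi_pos]
  set A := ∫ t in (-π:ℝ)..π, f t^2 with hA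
  set B := ∫ t in (-π:ℝ)..π, g t^2 with hB
  have hA0 : 0 ≤ A := intervalIntegral.integral_nonneg hab fun t _ => sq_nonneg _
  have hB0 : 0 ≤ B := intervalIntegral.integral_nonneg hab fun t _ => sq_nonneg _
  have key : ∀ c : ℝ, 0 < c → (∫ t in (-π:ℝ)..π, f t * g t) ≤ (c*A + B/c)/2 := by
    intro c hc
    have pt : ∀ t, 2*c*(f t * g t) ≤ c^2 * f t^2 + g t^2 := by
      intro t; nlinarith [sq_nonneg (c * f t - g t)]
    have h2 : (∫ t in (-π:ℝ)..π, 2*c*(f t * g t))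
        ≤ ∫ t in (-π:ℝ)..π, (c^2 * f t^2 + g t^2) := by
      apply intervalIntegral.integral_mono_on hab
      · exact (continuous_const.mul (hf.mul hg)).intervalIntegrable _ _
      · exact ((continuous_const.mul (hf.pow 2)).add (hg.pow 2)).intervalIntegrable _ _
      · exact fun t _ => pt t
    rw [intervalIntegral.integral_const_mul] at h2
    rw [intervalIntegral.integral_add (f := fun t => c^2 * f t^2) (g := fun t => g t^2) ((continuous_const.mul (hf.pow 2)).intervalIntegrable _ _)
      ((hg.pow 2).intervalIntegrable _ _), intervalIntegral.integral_const_mul] at h2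
    have hD : B / c * c = B := div_mul_cancel₀ _ hc.ne'
    nlinarith [h2, hD, hc, mul_pos hc hc]
  have h3 : ∀ ε : ℝ, 0 < ε →
      (∫ t in (-π:ℝ)..π, f t * g t) ≤ Real.sqrt (A+ε) * Real.sqrt (B+ε) := by
    intro ε hε
    have hAε : 0 < A + ε := by linarith
    have hBε : 0 < B + ε := by linarith
    set a := Real.sqrt (A+ε) with ha
    set b := Real.sqrt (B+ε) with hb
    have ha0 : 0 < a := Real.sqrt_pos.2 hAε
    have hb0 : 0 < b := Real.sqrt_pos.2 hBε
    have ha2 : a^2 = A + ε := Real.sq_sqrt hAε.le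
    have hb2 : b^2 = B + ε := Real.sq_sqrt hBε.le
    have hc0 : 0 < b/a := div_pos hb0 ha0
    calc (∫ t in (-π:ℝ)..π, f t * g t) ≤ ((b/a)*A + B/(b/a))/2 := key _ hc0
      _ ≤ ((b/a)*(A+ε) + (B+ε)/(b/a))/2 := by
          have h1 : (b/a)*A ≤ (b/a)*(A+ε) := by nlinarith
          have h2' : B/(b/a) ≤ (B+ε)/(b/a) := (div_le_div_iff_of_pos_right hc0).2 (by linarith)
          linarith
      _ = a * b := by
          rw [← ha2, ← hb2]; field_simp; ring
  have lim : Filter.Tendsto (fun ε : ℝ => Real.sqrt (A+ε) * Real.sqrt (B+ε))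
      (nhdsWithin 0 (Set.Ioi 0)) (nhds (Real.sqrt A * Real.sqrt B)) := by
    have hco : Continuous fun ε : ℝ => Real.sqrt (A+ε) * Real.sqrt (B+ε) := by
      fun_prop
    simpa using (hco.tendsto 0).mono_left nhdsWithin_le_nhds
  exact ge_of_tendsto lim (eventually_nhdsWithin_of_forall fun ε hε => h3 ε hε)

private lemma card_bad (n : ℕ) (m : ℤ) :
    ((Finset.range n).filter
      (fun k : ℕ => ¬((0:ℤ) ≤ (k:ℤ) + m ∧ (k:ℤ) + m < (n:ℤ)))).card ≤ m.natAbs := by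
  rcases le_or_gt 0 m with h | h
  · refine le_trans (Finset.card_le_card (t := Finset.Ico (n - m.toNat) n)
      (fun k hk => ?_)) ?_
    · simp only [Finset.mem_filter, Finset.mem_range] at hk
      exact Finset.mem_Ico.2 (by omega : n - m.toNat ≤ k ∧ k < n)
    · rw [Nat.card_Ico]; omega
  · refine le_trans (Finset.card_le_card (t := Finset.range m.natAbs)
      (fun k hk => ?_)) ?_
    · simp only [Finset.mem_filter, Finset.mem_range] at hk
      exact Finset.mem_range.2 (by omega : k < m.natAbs)
    · rw [Finset.card_range]

private lemma toeplitz_sum_approx (S : Finset ℤ) (a : ℤ → ℂ) (ha : ∀ m, m ∉ S → a m = 0) (n : ℕ) :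
    ‖(n:ℂ) * ∑ m ∈ S, a m - ∑ k ∈ Finset.range n, ∑ j ∈ Finset.range n, a ((j:ℤ) - (k:ℤ))‖
      ≤ ∑ m ∈ S, (m.natAbs : ℝ) * ‖a m‖ := by
  classical
  set img : ℕ → Finset ℤ := fun k => (Finset.range n).image (fun j : ℕ => (j:ℤ) - (k:ℤ))
    with himg
  have hmem : ∀ k m, m ∈ img k ↔ ((0:ℤ) ≤ (k:ℤ) + m ∧ (k:ℤ) + m < (n:ℤ)) := by
    intro k m
    simp only [himg, Finset.mem_image, Finset.mem_range]
    constructor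
    · rintro ⟨j, hj, rfl⟩; omega
    · rintro ⟨h1, h2⟩; exact ⟨((k:ℤ) + m).toNat, by omega, by omega⟩
  have hk : ∀ k ∈ Finset.range n, (∑ j ∈ Finset.range n, a ((j:ℤ) - (k:ℤ)))
      = ∑ m ∈ img k, a m := by
    intro k _
    exact (Finset.sum_image (fun x _ y _ h => by omega)).symm
  have hsplit : ∀ k, (∑ m ∈ S, a m) - (∑ m ∈ img k, a m) = ∑ m ∈ S \ img k, a m := by
    intro k
    have h1 : ∑ m ∈ img k, a m = ∑ m ∈ S ∩ img k, a m := by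
      refine (Finset.sum_subset Finset.inter_subset_right fun m hm hm' => ?_).symm
      exact ha m fun hS => hm' (Finset.mem_inter.2 ⟨hS, hm⟩)
    rw [h1, ← Finset.sum_inter_add_sum_sdiff S (img k) a]
    ring
  rw [Finset.sum_congr rfl hk,
    show (n:ℂ) * ∑ m ∈ S, a m = ∑ _k ∈ Finset.range n, ∑ m ∈ S, a m by
      rw [Finset.sum_const, Finset.card_range, nsmul_eq_mul],
    ← Finset.sum_sub_distrib]
  simp only [hsplit]
  calc ‖∑ k ∈ Finset.range n, ∑ m ∈ S \ img k, a m‖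
      ≤ ∑ k ∈ Finset.range n, ∑ m ∈ S \ img k, ‖a m‖ :=
        (norm_sum_le _ _).trans (Finset.sum_le_sum fun k _ => norm_sum_le _ _)
    _ = ∑ k ∈ Finset.range n, ∑ m ∈ S, (if m ∉ img k then ‖a m‖ else 0) := by
        refine Finset.sum_congr rfl fun k _ => ?_
        rw [Finset.sdiff_eq_filter, Finset.sum_filter]
    _ = ∑ m ∈ S, ∑ k ∈ Finset.range n, (if m ∉ img k then ‖a m‖ else 0) := Finset.sum_comm
    _ ≤ ∑ m ∈ S, (m.natAbs : ℝ) * ‖a m‖ := by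
        refine Finset.sum_le_sum fun m _ => ?_
        rw [← Finset.sum_filter, Finset.sum_const, nsmul_eq_mul]
        refine mul_le_mul_of_nonneg_right ?_ (norm_nonneg _)
        have hcard : ((Finset.range n).filter (fun k : ℕ => m ∉ img k)).card
            = ((Finset.range n).filter
              (fun k : ℕ => ¬((0:ℤ) ≤ (k:ℤ) + m ∧ (k:ℤ) + m < (n:ℤ)))).card := by
          congr 1
          exact Finset.filter_congr fun k _ => by rw [hmem]
        rw [hcard]
        exact_mod_cast card_bad n m

private lemma exp_cont (c : ℂ) : Continuous fun t : ℝ => Complex.exp (c * t * Complex.I) := by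
  fun_prop

private lemma norm_exp_tI (m : ℤ) (t : ℝ) : ‖Complex.exp ((m:ℂ) * t * Complex.I)‖ = 1 := by
  rw [show ((m:ℂ) * t * Complex.I) = ((m * t : ℝ) : ℂ) * Complex.I by push_cast; ring,
    Complex.norm_exp_ofReal_mul_I]

private lemma conj_exp_neg (c : ℂ) (t : ℝ) :
    (starRingEnd ℂ) (Complex.exp (-c * t * Complex.I))
      = Complex.exp ((starRingEnd ℂ c) * t * Complex.I) := by
  rw [← Complex.exp_conj]
  congr 1
  simp only [map_mul, map_neg, Complex.conj_I, Complex.conj_ofReal]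
  ring

/-- The Fourier coefficient vector of a bounded continuous `H`-valued function. -/
private noncomputable def wvec (u : ℝ → H) (m : ℤ) : H :=
  (((2*π)⁻¹ : ℝ) : ℂ) • ∫ t in (-π:ℝ)..π, Complex.exp ((m:ℂ) * t * Complex.I) • u t

private lemma inner_wvec (u : ℝ → H) (hu : Continuous u) (m : ℤ) (v : H) :
    (inner ℂ v (wvec u m) : ℂ)
      = (((2*π)⁻¹ : ℝ) : ℂ) * ∫ t in (-π:ℝ)..π,
          Complex.exp ((m:ℂ) * t * Complex.I) * (inner ℂ v (u t) : ℂ) := by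
  rw [wvec, inner_smul_right]
  congr 1
  have h0 : (inner ℂ v (∫ t in (-π:ℝ)..π, Complex.exp ((m:ℂ) * t * Complex.I) • u t) : ℂ)
      = innerSL ℂ v (∫ t in (-π:ℝ)..π, Complex.exp ((m:ℂ) * t * Complex.I) • u t) := rfl
  rw [h0, ← ContinuousLinearMap.intervalIntegral_comp_comm (innerSL ℂ v)
    (f := fun t => Complex.exp ((m:ℂ) * t * Complex.I) • u t)
    (((exp_cont _).smul hu).intervalIntegrable _ _)]
  refine intervalIntegral.integral_congr fun t _ => ?_
  simp [inner_smul_right]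

private lemma norm_wvec_le (u : ℝ → H) (hu1 : ∀ t, ‖u t‖ ≤ 1) (m : ℤ) :
    ‖wvec u m‖ ≤ 1 := by
  have hpi : (0:ℝ) < 2*π := by positivity
  rw [wvec, norm_smul]
  have h1 : ‖(((2*π)⁻¹ : ℝ) : ℂ)‖ = (2*π)⁻¹ := by
    rw [Complex.norm_real, Real.norm_eq_abs, abs_of_nonneg (by positivity)]
  rw [h1]
  have h2 : ‖∫ t in (-π:ℝ)..π, Complex.exp ((m:ℂ) * t * Complex.I) • u t‖ ≤ 1 * |π - (-π)| := by
    apply intervalIntegral.norm_integral_le_of_norm_le_const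
    intro t _
    rw [norm_smul, norm_exp_tI, one_mul]
    exact hu1 t
  have h3 : (1:ℝ) * |π - (-π)| = 2*π := by
    rw [one_mul, abs_of_nonneg (by linarith [pi_pos])]; ring
  calc (2*π)⁻¹ * ‖∫ t in (-π:ℝ)..π, Complex.exp ((m:ℂ) * t * Complex.I) • u t‖
      ≤ (2*π)⁻¹ * (2*π) := by
        apply mul_le_mul_of_nonneg_left _ (by positivity)
        rw [← h3]; exact h2
    _ = 1 := inv_mul_cancel₀ hpi.ne'

private lemma rank_one_bound (u : ℝ → H) (hu : Continuous u) (hu1 : ∀ t, ‖u t‖ ≤ 1)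
    (x : H) (hx : ‖x‖ = 1) (F G : Finset ℕ) (p q : ℕ → H) :
    ‖∑ k ∈ G, ∑ j ∈ F,
        (inner ℂ (((innerSL ℂ (wvec u ((j:ℤ)-(k:ℤ)))).smulRight x) (p j)) (q k) : ℂ)‖
      ≤ Real.sqrt (∑ j ∈ F, ‖p j‖^2) * Real.sqrt (∑ k ∈ G, ‖q k‖^2) := by
  have hab : (-π:ℝ) ≤ π := by linarith [pi_pos]
  have hpi : (0:ℝ) < 2*π := by positivity
  set SF : ℝ → H := fun t => ∑ j ∈ F, Complex.exp (-(j:ℂ) * t * Complex.I) • p j with hSF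
  set SG : ℝ → H := fun t => ∑ k ∈ G, Complex.exp (-(k:ℂ) * t * Complex.I) • q k with hSG
  have hSFc : Continuous SF := continuous_finset_sum _ fun j _ =>
    ((exp_cont (-(j:ℂ))).smul continuous_const)
  have hSGc : Continuous SG := continuous_finset_sum _ fun k _ =>
    ((exp_cont (-(k:ℂ))).smul continuous_const)
  have hgc : ∀ (k j : ℕ), Continuous fun t : ℝ =>
      (Complex.exp ((j:ℂ) * t * Complex.I) * (inner ℂ (p j) (u t) : ℂ))
        * (Complex.exp (-(k:ℂ) * t * Complex.I) * (inner ℂ x (q k) : ℂ)) := by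
    intro k j
    exact ((exp_cont _).mul (continuous_const.inner hu)).mul
      ((exp_cont _).mul continuous_const)
  have key : (∑ k ∈ G, ∑ j ∈ F,
      (inner ℂ (((innerSL ℂ (wvec u ((j:ℤ)-(k:ℤ)))).smulRight x) (p j)) (q k) : ℂ))
      = (((2*π)⁻¹ : ℝ) : ℂ) * ∫ t in (-π:ℝ)..π,
          (inner ℂ (SF t) (u t) : ℂ) * (inner ℂ x (SG t) : ℂ) := by
    have hterm : ∀ k ∈ G, ∀ j ∈ F,
        (inner ℂ (((innerSL ℂ (wvec u ((j:ℤ)-(k:ℤ)))).smulRight x) (p j)) (q k) : ℂ)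
        = (((2*π)⁻¹ : ℝ) : ℂ) * ∫ t in (-π:ℝ)..π,
            (Complex.exp ((j:ℂ) * t * Complex.I) * (inner ℂ (p j) (u t) : ℂ))
              * (Complex.exp (-(k:ℂ) * t * Complex.I) * (inner ℂ x (q k) : ℂ)) := by
      intro k _ j _
      rw [ContinuousLinearMap.smulRight_apply, innerSL_apply_apply, inner_smul_left,
        inner_conj_symm, inner_wvec u hu, mul_comm, ← mul_assoc,
        mul_comm _ ((((2*π)⁻¹ : ℝ) : ℂ)), mul_assoc]
      congr 1
      rw [← intervalIntegral.integral_const_mul]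
      refine intervalIntegral.integral_congr fun t _ => ?_
      have hexp : Complex.exp (((j - k : ℤ) : ℂ) * t * Complex.I)
          = Complex.exp ((j:ℂ) * t * Complex.I) * Complex.exp (-(k:ℂ) * t * Complex.I) := by
        rw [← Complex.exp_add]; congr 1; push_cast; ring
      rw [hexp]; ring
    rw [Finset.sum_congr rfl (fun k hk => Finset.sum_congr rfl (hterm k hk))]
    simp only [← Finset.mul_sum]
    congr 1
    have h1 : ∀ k ∈ G, (∑ j ∈ F, ∫ t in (-π:ℝ)..π,
        (Complex.exp ((j:ℂ) * t * Complex.I) * (inner ℂ (p j) (u t) : ℂ))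
          * (Complex.exp (-(k:ℂ) * t * Complex.I) * (inner ℂ x (q k) : ℂ)))
        = ∫ t in (-π:ℝ)..π, ∑ j ∈ F,
        (Complex.exp ((j:ℂ) * t * Complex.I) * (inner ℂ (p j) (u t) : ℂ))
          * (Complex.exp (-(k:ℂ) * t * Complex.I) * (inner ℂ x (q k) : ℂ)) :=
      fun k _ => (intervalIntegral.integral_finset_sum
        (fun j _ => (hgc k j).intervalIntegrable _ _)).symm
    rw [Finset.sum_congr rfl h1, ← intervalIntegral.integral_finset_sum
      (fun k _ => (continuous_finset_sum _ fun j _ => hgc k j).intervalIntegrable _ _)]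
    refine intervalIntegral.integral_congr fun t _ => ?_
    have hSFu : (inner ℂ (SF t) (u t) : ℂ)
        = ∑ j ∈ F, Complex.exp ((j:ℂ) * t * Complex.I) * (inner ℂ (p j) (u t) : ℂ) := by
      rw [hSF]
      rw [sum_inner]
      refine Finset.sum_congr rfl fun j _ => ?_
      rw [inner_smul_left, conj_exp_neg]
      simp
    have hxSG : (inner ℂ x (SG t) : ℂ)
        = ∑ k ∈ G, Complex.exp (-(k:ℂ) * t * Complex.I) * (inner ℂ x (q k) : ℂ) := by
      rw [hSG]
      rw [inner_sum]
      refine Finset.sum_congr rfl fun k _ => ?_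
      rw [inner_smul_right]
    rw [hSFu, hxSG, Finset.sum_mul_sum]
    exact Finset.sum_comm
  rw [key]
  have hΦc : Continuous fun t : ℝ => (inner ℂ (SF t) (u t) : ℂ) * (inner ℂ x (SG t) : ℂ) :=
    (hSFc.inner hu).mul (continuous_const.inner hSGc)
  have hpt : ∀ t : ℝ, ‖(inner ℂ (SF t) (u t) : ℂ) * (inner ℂ x (SG t) : ℂ)‖ ≤ ‖SF t‖ * ‖SG t‖ := by
    intro t
    rw [norm_mul]
    have e1 : ‖(inner ℂ (SF t) (u t) : ℂ)‖ ≤ ‖SF t‖ := by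
      refine (norm_inner_le_norm _ _).trans ?_
      nlinarith [hu1 t, norm_nonneg (SF t), norm_nonneg (u t)]
    have e2 : ‖(inner ℂ x (SG t) : ℂ)‖ ≤ ‖SG t‖ := by
      refine (norm_inner_le_norm _ _).trans ?_
      rw [hx, one_mul]
    exact mul_le_mul e1 e2 (norm_nonneg _) (by positivity)
  calc ‖(((2*π)⁻¹ : ℝ) : ℂ) * ∫ t in (-π:ℝ)..π,
        (inner ℂ (SF t) (u t) : ℂ) * (inner ℂ x (SG t) : ℂ)‖
      = (2*π)⁻¹ * ‖∫ t in (-π:ℝ)..π, (inner ℂ (SF t) (u t) : ℂ) * (inner ℂ x (SG t) : ℂ)‖ := by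
        rw [norm_mul, Complex.norm_real, Real.norm_eq_abs, abs_of_nonneg (by positivity)]
    _ ≤ (2*π)⁻¹ * ∫ t in (-π:ℝ)..π, ‖(inner ℂ (SF t) (u t) : ℂ) * (inner ℂ x (SG t) : ℂ)‖ :=
        mul_le_mul_of_nonneg_left (intervalIntegral.norm_integral_le_integral_norm hab)
          (by positivity)
    _ ≤ (2*π)⁻¹ * ∫ t in (-π:ℝ)..π, ‖SF t‖ * ‖SG t‖ := by
        refine mul_le_mul_of_nonneg_left ?_ (by positivity)
        refine intervalIntegral.integral_mono_on hab (hΦc.norm.intervalIntegrable _ _)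
          ((hSFc.norm.mul hSGc.norm).intervalIntegrable _ _) fun t _ => hpt t
    _ ≤ (2*π)⁻¹ * (Real.sqrt (∫ t in (-π:ℝ)..π, ‖SF t‖^2)
          * Real.sqrt (∫ t in (-π:ℝ)..π, ‖SG t‖^2)) := by
        refine mul_le_mul_of_nonneg_left (cs_integral hSFc.norm hSGc.norm) (by positivity)
    _ = (2*π)⁻¹ * (Real.sqrt (2*π*∑ j ∈ F, ‖p j‖^2) * Real.sqrt (2*π*∑ k ∈ G, ‖q k‖^2)) := by
        rw [hSF, hSG]
        rw [parseval, parseval]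
    _ = Real.sqrt (∑ j ∈ F, ‖p j‖^2) * Real.sqrt (∑ k ∈ G, ‖q k‖^2) := by
        rw [Real.sqrt_mul hpi.le, Real.sqrt_mul hpi.le]
        have h2 : Real.sqrt (2*π) * Real.sqrt (2*π) = 2*π := Real.mul_self_sqrt hpi.le
        calc (2*π)⁻¹ * (Real.sqrt (2*π) * Real.sqrt (∑ j ∈ F, ‖p j‖^2)
              * (Real.sqrt (2*π) * Real.sqrt (∑ k ∈ G, ‖q k‖^2)))
            = (2*π)⁻¹ * ((Real.sqrt (2*π) * Real.sqrt (2*π))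
              * (Real.sqrt (∑ j ∈ F, ‖p j‖^2) * Real.sqrt (∑ k ∈ G, ‖q k‖^2))) := by ring
          _ = Real.sqrt (∑ j ∈ F, ‖p j‖^2) * Real.sqrt (∑ k ∈ G, ‖q k‖^2) := by
              rw [h2, ← mul_assoc, inv_mul_cancel₀ hpi.ne', one_mul]

end SOTAuxiliary

open Real in
/-- For a `B(H)`-valued trigonometric polynomial `P(t) = ∑_l T_l e^{ilt}`, the `SOT-L¹`
norm `sup_{‖x‖=1} (1/2π)∫₀^{2π}‖∑_l T_l(x)e^{ilt}‖dt` is dominated by the right Schur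
multiplier norm of the Toeplitz matrix `A_P = (T_{j−k})`. -/
theorem sotL1_le_mrNorm (T : ℤ → (H →L[ℂ] H)) (hfin : (Function.support T).Finite) :
    ∀ C : ℝ, 0 ≤ C →
      MrBoundedBy (fun k j => T ((j : ℤ) - (k : ℤ))) C →
      ∀ x : H, ‖x‖ = 1 →
        (2 * π)⁻¹ * ∫ t in (-π)..π, ‖∑ᶠ l : ℤ, Complex.exp ((l : ℂ) * t * Complex.I) • T l x‖
          ≤ C := by
  intro C hC hmul x hx
  classical
  have hab : (-π:ℝ) ≤ π := by linarith [pi_pos]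
  have hpi : (0:ℝ) < 2*π := by positivity
  set S : Finset ℤ := hfin.toFinset with hSdef
  set f : ℝ → H := fun t => ∑ l ∈ S, Complex.exp ((l:ℂ) * t * Complex.I) • T l x with hfdef
  have hfsum : ∀ t : ℝ, (∑ᶠ l : ℤ, Complex.exp ((l:ℂ) * t * Complex.I) • T l x) = f t := by
    intro t
    apply finsum_eq_sum_of_support_subset
    intro l hl
    simp only [Function.mem_support] at hl
    have hTl : T l ≠ 0 := by
      intro h0; apply hl; rw [h0]; simp
    simp only [hSdef, Finset.coe_sort_coe, Set.Finite.coe_toFinset]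
    exact hTl
  have hfc : Continuous f :=
    continuous_finset_sum _ fun l _ => (exp_cont _).smul continuous_const
  simp only [hfsum]
  refine le_of_forall_pos_le_add fun ε hε => ?_
  set δ : ℝ := ε/2 with hδdef
  have hδ : 0 < δ := by positivity
  set r : ℝ → ℝ := fun t => max ‖f (-t)‖ δ with hrdef
  have hr_pos : ∀ t, 0 < r t := fun t => lt_of_lt_of_le hδ (le_max_right _ _)
  have hr_ge : ∀ t, ‖f (-t)‖ ≤ r t := fun t => le_max_left _ _
  have hrc : Continuous r := ((hfc.comp continuous_neg).norm).max continuous_const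
  set u : ℝ → H := fun t => ((r t : ℝ) : ℂ)⁻¹ • f (-t) with hudef
  have huc : Continuous u :=
    ((Complex.continuous_ofReal.comp hrc).inv₀
      (fun t => by
        simp only [Function.comp_apply, ne_eq, Complex.ofReal_eq_zero]
        exact (hr_pos t).ne')).smul (hfc.comp continuous_neg)
  have hu1 : ∀ t, ‖u t‖ ≤ 1 := by
    intro t
    rw [hudef]
    simp only []
    rw [norm_smul, norm_inv, Complex.norm_real, Real.norm_eq_abs,
      abs_of_nonneg (hr_pos t).le]
    rw [inv_mul_le_iff₀ (hr_pos t), mul_one]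
    exact hr_ge t
  set B : ℕ → ℕ → (H →L[ℂ] H) :=
    fun k j => (innerSL ℂ (wvec u ((j:ℤ) - (k:ℤ)))).smulRight x with hBdef
  have hB : SchurBoundedBy B 1 := by
    intro F G p q
    rw [one_mul]
    exact rank_one_bound u huc hu1 x hx F G p q
  have hSchur := hmul B 1 zero_le_one hB
  set a : ℤ → ℂ := fun m => (inner ℂ (T m x) (wvec u m) : ℂ) with hadef
  have ha0 : ∀ m, m ∉ S → a m = 0 := by
    intro m hm
    have hTm : T m = 0 := by
      by_contra hne
      exact hm (by
        rw [hSdef, Set.Finite.mem_toFinset, Function.mem_support]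
        exact hne)
    simp [hadef, hTm]
  have haK : ∀ m, ‖a m‖ ≤ ‖T m x‖ := by
    intro m
    calc ‖a m‖ ≤ ‖T m x‖ * ‖wvec u m‖ := norm_inner_le_norm _ _
      _ ≤ ‖T m x‖ * 1 :=
          mul_le_mul_of_nonneg_left (norm_wvec_le u hu1 m) (norm_nonneg _)
      _ = ‖T m x‖ := mul_one _
  set K : ℝ := ∑ m ∈ S, (m.natAbs : ℝ) * ‖T m x‖ with hKdef
  have hK0 : 0 ≤ K := Finset.sum_nonneg fun m _ => by positivity
  have hxx : (inner ℂ x x : ℂ) = 1 := by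
    rw [inner_self_eq_norm_sq_to_K, hx]
    norm_num
  have hbound : ∀ n : ℕ, ‖∑ m ∈ S, a m‖ * n ≤ C * n + K := by
    intro n
    have hentry : ∀ k j : ℕ,
        (inner ℂ ((schur B (fun k j => T ((j:ℤ) - (k:ℤ)))) k j ((fun _ => x) j))
          ((fun _ => x) k) : ℂ) = a ((j:ℤ) - (k:ℤ)) := by
      intro k j
      show (inner ℂ (B k j (T ((j:ℤ) - (k:ℤ)) x)) x : ℂ) = a ((j:ℤ) - (k:ℤ))
      rw [hBdef]
      simp only []
      rw [ContinuousLinearMap.smulRight_apply, innerSL_apply_apply, inner_smul_left,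
        inner_conj_symm, hxx, mul_one, hadef]
    have happ : ‖∑ k ∈ Finset.range n, ∑ j ∈ Finset.range n, a ((j:ℤ) - (k:ℤ))‖
        ≤ C * n := by
      have h1 := hSchur (Finset.range n) (Finset.range n) (fun _ => x) (fun _ => x)
      rw [Finset.sum_congr rfl (fun k _ => Finset.sum_congr rfl
        (fun j _ => hentry k j))] at h1
      have h2 : (∑ j ∈ Finset.range n, ‖x‖^2 : ℝ) = n := by
        rw [Finset.sum_const, Finset.card_range, hx, nsmul_eq_mul]
        norm_num
      rw [h2, mul_one] at h1
      calc ‖∑ k ∈ Finset.range n, ∑ j ∈ Finset.range n, a ((j:ℤ) - (k:ℤ))‖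
          ≤ C * Real.sqrt n * Real.sqrt n := h1
        _ = C * n := by rw [mul_assoc, Real.mul_self_sqrt (Nat.cast_nonneg n)]
    have htp := toeplitz_sum_approx S a ha0 n
    have htpK : ‖(n:ℂ) * ∑ m ∈ S, a m
        - ∑ k ∈ Finset.range n, ∑ j ∈ Finset.range n, a ((j:ℤ) - (k:ℤ))‖ ≤ K := by
      refine htp.trans (Finset.sum_le_sum fun m _ => ?_)
      exact mul_le_mul_of_nonneg_left (haK m) (Nat.cast_nonneg _)
    have hnorm : ‖∑ m ∈ S, a m‖ * n = ‖(n:ℂ) * ∑ m ∈ S, a m‖ := by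
      rw [norm_mul, Complex.norm_natCast, mul_comm]
    rw [hnorm]
    calc ‖(n:ℂ) * ∑ m ∈ S, a m‖
        ≤ ‖(n:ℂ) * ∑ m ∈ S, a m
            - ∑ k ∈ Finset.range n, ∑ j ∈ Finset.range n, a ((j:ℤ) - (k:ℤ))‖
          + ‖∑ k ∈ Finset.range n, ∑ j ∈ Finset.range n, a ((j:ℤ) - (k:ℤ))‖ := by
          simpa using norm_add_le ((n:ℂ) * ∑ m ∈ S, a m
            - ∑ k ∈ Finset.range n, ∑ j ∈ Finset.range n, a ((j:ℤ) - (k:ℤ)))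
            (∑ k ∈ Finset.range n, ∑ j ∈ Finset.range n, a ((j:ℤ) - (k:ℤ)))
      _ ≤ K + C * n := add_le_add htpK happ
      _ = C * n + K := by ring
  have hlower : (2*π)⁻¹ * (∫ t in (-π:ℝ)..π, ‖f t‖)
      ≤ Complex.re (∑ m ∈ S, a m) + δ := by
    have hsum : (∑ m ∈ S, a m) = (((2*π)⁻¹:ℝ):ℂ)
        * ∫ t in (-π:ℝ)..π, (inner ℂ (f (-t)) (u t) : ℂ) := by
      have h1 : ∀ m ∈ S, a m = (((2*π)⁻¹:ℝ):ℂ) * ∫ t in (-π:ℝ)..π,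
          Complex.exp ((m:ℂ) * t * Complex.I) * (inner ℂ (T m x) (u t) : ℂ) :=
        fun m _ => inner_wvec u huc m (T m x)
      rw [Finset.sum_congr rfl h1, ← Finset.mul_sum]
      congr 1
      rw [← intervalIntegral.integral_finset_sum
        (f := fun (m : ℤ) (t : ℝ) => Complex.exp ((m:ℂ) * t * Complex.I) * (inner ℂ (T m x) (u t) : ℂ))
        (fun m _ => ((exp_cont _).mul (continuous_const.inner huc)).intervalIntegrable _ _)]
      refine intervalIntegral.integral_congr fun t _ => ?_
      have hft : (inner ℂ (f (-t)) (u t) : ℂ)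
          = ∑ m ∈ S, Complex.exp ((m:ℂ) * t * Complex.I) * (inner ℂ (T m x) (u t) : ℂ) := by
        rw [hfdef]
        simp only []
        rw [sum_inner]
        refine Finset.sum_congr rfl fun m _ => ?_
        have harg : Complex.exp ((m:ℂ) * ((-t:ℝ):ℂ) * Complex.I)
            = Complex.exp (-(m:ℂ) * (t:ℝ) * Complex.I) := by
          congr 1; push_cast; ring
        rw [inner_smul_left, harg, conj_exp_neg]
        congr 2
        simp
      rw [hft]
    have hcont_inner : Continuous fun t : ℝ => (inner ℂ (f (-t)) (u t) : ℂ) :=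
      (hfc.comp continuous_neg).inner huc
    have hre : Complex.re (∑ m ∈ S, a m)
        = (2*π)⁻¹ * ∫ t in (-π:ℝ)..π, Complex.re (inner ℂ (f (-t)) (u t) : ℂ) := by
      rw [hsum, Complex.re_ofReal_mul]
      congr 1
      exact (Complex.reCLM.intervalIntegral_comp_comm
        (hcont_inner.intervalIntegrable _ _)).symm
    have hpt : ∀ t : ℝ, ‖f (-t)‖ - δ ≤ Complex.re (inner ℂ (f (-t)) (u t) : ℂ) := by
      intro t
      have hcalc : Complex.re (inner ℂ (f (-t)) (u t) : ℂ)
          = (r t)⁻¹ * ‖f (-t)‖^2 := by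
        rw [hudef]
        simp only []
        rw [inner_smul_right, ← Complex.ofReal_inv, Complex.re_ofReal_mul,
          ← RCLike.re_to_complex, inner_self_eq_norm_sq]
      rw [hcalc]
      rcases le_total ‖f (-t)‖ δ with hle | hge
      · have hnn : 0 ≤ (r t)⁻¹ * ‖f (-t)‖^2 := by positivity
        linarith
      · have hrt : r t = ‖f (-t)‖ := max_eq_left hge
        have hvpos : 0 < ‖f (-t)‖ := lt_of_lt_of_le hδ hge
        rw [hrt, sq, ← mul_assoc, inv_mul_cancel₀ hvpos.ne', one_mul]
        linarith
    have hint : (∫ t in (-π:ℝ)..π, (‖f (-t)‖ - δ))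
        ≤ ∫ t in (-π:ℝ)..π, Complex.re (inner ℂ (f (-t)) (u t) : ℂ) := by
      refine intervalIntegral.integral_mono_on hab
        (((hfc.comp continuous_neg).norm.sub continuous_const).intervalIntegrable _ _)
        ((Complex.continuous_re.comp hcont_inner).intervalIntegrable _ _)
        fun t _ => hpt t
    have hneg : (∫ t in (-π:ℝ)..π, ‖f (-t)‖) = ∫ t in (-π:ℝ)..π, ‖f t‖ := by
      rw [intervalIntegral.integral_comp_neg (fun t => ‖f t‖)]
      norm_num
    have hc1 : Continuous fun t : ℝ => ‖f (-t)‖ := (hfc.comp continuous_neg).norm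
    have hsub : (∫ t in (-π:ℝ)..π, (‖f (-t)‖ - δ))
        = (∫ t in (-π:ℝ)..π, ‖f t‖) - 2*π*δ := by
      rw [intervalIntegral.integral_sub (hc1.intervalIntegrable _ _)
        (intervalIntegrable_const), intervalIntegral.integral_const, hneg]
      rw [smul_eq_mul]
      ring
    rw [hsub] at hint
    have hfinal := mul_le_mul_of_nonneg_left hint (by positivity : (0:ℝ) ≤ (2*π)⁻¹)
    rw [mul_sub] at hfinal
    have hcancel : (2*π)⁻¹ * (2*π*δ) = δ := by
      field_simp
    rw [hcancel] at hfinal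
    rw [hre]
    linarith
  obtain ⟨n, hn⟩ := exists_nat_gt (K/δ)
  have hn0 : (0:ℝ) < n := lt_of_le_of_lt (by positivity) hn
  have h1 : ‖∑ m ∈ S, a m‖ ≤ C + K/n := by
    have hb := hbound n
    have : ‖∑ m ∈ S, a m‖ ≤ (C * n + K)/n := by
      rw [le_div_iff₀ hn0]
      exact hb
    calc ‖∑ m ∈ S, a m‖ ≤ (C * n + K)/n := this
      _ = C + K/n := by
        rw [add_div, mul_div_assoc, div_self hn0.ne', mul_one]
  have h2 : K/(n:ℝ) ≤ δ := by
    rw [div_le_iff₀ hn0]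
    rw [div_lt_iff₀ hδ] at hn
    linarith
  have h3 : Complex.re (∑ m ∈ S, a m) ≤ ‖∑ m ∈ S, a m‖ := Complex.re_le_norm _
  calc (2*π)⁻¹ * (∫ t in (-π:ℝ)..π, ‖f t‖)
      ≤ Complex.re (∑ m ∈ S, a m) + δ := hlower
    _ ≤ ‖∑ m ∈ S, a m‖ + δ := by linarith
    _ ≤ (C + K/n) + δ := by linarith
    _ ≤ C + δ + δ := by linarith
    _ = C + ε := by rw [hδdef]; ring
end
end

section
/- Let A = (T_{j−k}) be an upper triangular Toeplitz matrix with entries in B(H) (T_l = 0 for l < 0) satisfying sup_{l≥0}‖T_l‖ < ∞, and let G_A(z) = ∑_{l≥0} T_l z^l for |z|<1. If G_A belongs to H¹(𝔻, B(H)) (i.e. sup_{0<r<1} (1/2π)∫₀^{2π}‖G_A(re^{it})‖dt < ∞), then A is a right Schur multiplier with ‖A‖_{M_r(ℓ²(H))} ≤ ‖G_A‖_{H¹(𝔻,B(H))}. -/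
open Finset Filter

noncomputable section

variable {H : Type*} [NormedAddCommGroup H] [InnerProductSpace ℂ H]
  [CompleteSpace H] [TopologicalSpace.SeparableSpace H]

private lemma integral_exp_int_mul_aux (n : ℤ) :
    ∫ t in (-Real.pi)..Real.pi, Complex.exp ((n : ℂ) * t * Complex.I) =
      if n = 0 then (2 * Real.pi : ℂ) else 0 := by
  rcases eq_or_ne n 0 with h | h
  · simp [h]
    push_cast
    ring
  · rw [if_neg h]
    have h2 : ∀ t : ℝ, (n : ℂ) * t * Complex.I = ((n : ℂ) * Complex.I) * t := fun t => by ring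
    simp_rw [h2]
    rw [integral_exp_mul_complex (by simp [h, Complex.I_ne_zero])]
    have hpos : Complex.exp ((n:ℂ) * Complex.I * (Real.pi:ℝ)) = (-1 : ℂ) ^ n := by
      rw [show (n:ℂ) * Complex.I * (Real.pi:ℝ) = (n:ℂ) * ((Real.pi:ℝ) * Complex.I) by ring,
        Complex.exp_int_mul, Complex.exp_pi_mul_I]
    have hneg : Complex.exp ((n:ℂ) * Complex.I * ((-Real.pi:ℝ):ℂ)) = ((-1 : ℂ) ^ n)⁻¹ := by
      rw [show (n:ℂ) * Complex.I * ((-Real.pi:ℝ):ℂ)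
            = ((-n : ℤ) : ℂ) * ((Real.pi:ℝ) * Complex.I) by push_cast; ring,
        Complex.exp_int_mul, Complex.exp_pi_mul_I, zpow_neg]
    have hinv : ((-1 : ℂ) ^ n)⁻¹ = (-1 : ℂ) ^ n := by
      have h1 : ((-1 : ℂ) ^ n) * ((-1 : ℂ) ^ n) = 1 := by
        rw [← zpow_add₀ (by norm_num : (-1:ℂ) ≠ 0), show n + n = 2 * n by ring, zpow_mul]
        norm_num
      rw [inv_eq_of_mul_eq_one_right h1]
    rw [hpos, hneg, hinv, sub_self, zero_div]

open Real in
/-- If `A = (T_{j−k})` is an upper triangular Toeplitz matrix with `sup_l ‖T_l‖ < ∞` and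
`G_A(z) = ∑_{l≥0} T_l z^l` belongs to `H¹(𝔻, B(H))` with `‖G_A‖_{H¹} ≤ C`, then `A` is a
right Schur multiplier with `‖A‖_{M_r(ℓ²(H))} ≤ C ( = ‖G_A‖_{H¹(𝔻,B(H))})`. -/
theorem uppertriangular_toeplitz_H1 (T : ℕ → (H →L[ℂ] H))
    (hbdd : ∃ M : ℝ, ∀ l : ℕ, ‖T l‖ ≤ M) (C : ℝ) (hC : 0 ≤ C)
    (hH1 : ∀ r : ℝ, 0 < r → r < 1 →
      (2 * π)⁻¹ * ∫ t in (-π)..π,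
        ‖∑' l : ℕ, ((r : ℂ) * Complex.exp (t * Complex.I)) ^ l • T l‖ ≤ C) :
    MrBoundedBy
      (fun k j => if k ≤ j then T (j - k) else 0) C := by
  obtain ⟨M, hM⟩ := hbdd
  set M' := max M 0 with hM'def
  have hM' : ∀ l, ‖T l‖ ≤ M' := fun l => le_trans (hM l) (le_max_left _ _)
  have hM'0 : 0 ≤ M' := le_max_right _ _
  intro B D hD hB F G x y
  set X := Real.sqrt (∑ j ∈ F, ‖x j‖ ^ 2) with hXdef
  set Y := Real.sqrt (∑ k ∈ G, ‖y k‖ ^ 2) with hYdef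
  have hX0 : 0 ≤ X := Real.sqrt_nonneg _
  have hY0 : 0 ≤ Y := Real.sqrt_nonneg _
  set a : ℕ → ℕ → ℕ → ℂ := fun k j l => inner ℂ (B k j (T l (x j))) (y k) with hadef
  set S : ℝ → ℂ := fun r =>
    ∑ k ∈ G, ∑ j ∈ F, (if k ≤ j then (r:ℂ) ^ (j - k) * a k j (j - k) else 0) with hSdef
  have hπ : (-π:ℝ) ≤ π := neg_le_self pi_pos.le
  -- Step 1: the goal sum is S 1
  have hgoal : (∑ k ∈ G, ∑ j ∈ F,
      (inner ℂ ((schur B (fun k j => if k ≤ j then T (j - k) else 0)) k j (x j)) (y k) : ℂ))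
      = S 1 := by
    refine Finset.sum_congr rfl fun k _ => Finset.sum_congr rfl fun j _ => ?_
    simp only [schur, ContinuousLinearMap.comp_apply, hSdef, hadef]
    split_ifs with h
    · simp
    · simp
  -- Step 2: the bound for 0 < r < 1
  have key : ∀ r : ℝ, r ∈ Set.Ioo (0:ℝ) 1 → ‖S r‖ ≤ C * D * X * Y := by
    rintro r ⟨hr0, hr1⟩
    set z : ℝ → ℂ := fun t => (r:ℂ) * Complex.exp ((t:ℂ) * Complex.I) with hzdef
    have hz : ∀ t, ‖z t‖ = r := by
      intro t
      simp [hzdef, map_mul, Complex.norm_exp_ofReal_mul_I,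
        abs_of_pos hr0]
    have hgeo : Summable (fun l : ℕ => r ^ l) := summable_geometric_of_lt_one hr0.le hr1
    have hsum_op : ∀ t, Summable (fun l : ℕ => (z t) ^ l • T l) := by
      intro t
      apply Summable.of_norm_bounded (g := fun l => M' * r ^ l) (hgeo.mul_left M')
      intro l
      rw [norm_smul, norm_pow, hz]
      calc r ^ l * ‖T l‖ ≤ r ^ l * M' :=
            mul_le_mul_of_nonneg_left (hM' l) (pow_nonneg hr0.le l)
        _ = M' * r ^ l := mul_comm _ _
    set g : ℝ → (H →L[ℂ] H) := fun t => ∑' l : ℕ, (z t) ^ l • T l with hgdef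
    have hzc : Continuous z := by fun_prop
    have hg_cont : Continuous g := by
      apply continuous_tsum (fun l => ((hzc.pow l).smul continuous_const)) (hgeo.mul_left M')
      intro l t
      show ‖(z t) ^ l • T l‖ ≤ M' * r ^ l
      rw [norm_smul, norm_pow, hz]
      calc r ^ l * ‖T l‖ ≤ r ^ l * M' :=
            mul_le_mul_of_nonneg_left (hM' l) (pow_nonneg hr0.le l)
        _ = M' * r ^ l := mul_comm _ _
    have hgx : ∀ t (j : ℕ), g t (x j) = ∑' l : ℕ, (z t) ^ l • (T l (x j)) := by
      intro t j
      have := ContinuousLinearMap.map_tsum (ContinuousLinearMap.apply ℂ H (x j)) (hsum_op t)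
      simpa [ContinuousLinearMap.smul_apply] using this
    have hw : ∀ t (j : ℕ), Summable (fun l : ℕ => (z t) ^ l • (T l (x j))) := by
      intro t j
      apply Summable.of_norm_bounded (g := fun l => (M' * ‖x j‖) * r ^ l) (hgeo.mul_left _)
      intro l
      rw [norm_smul, norm_pow, hz]
      calc r ^ l * ‖T l (x j)‖ ≤ r ^ l * (M' * ‖x j‖) := by
            apply mul_le_mul_of_nonneg_left _ (pow_nonneg hr0.le l)
            exact le_trans ((T l).le_opNorm (x j))
              (mul_le_mul_of_nonneg_right (hM' l) (norm_nonneg _))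
        _ = (M' * ‖x j‖) * r ^ l := mul_comm _ _
    -- expansion of the inner products into series
    have h3 : ∀ t (k j : ℕ), (inner ℂ (B k j (g t (x j))) (y k) : ℂ) =
        ∑' l : ℕ, (starRingEnd ℂ) ((z t) ^ l) * a k j l := by
      intro t k j
      have hw2 : Summable (fun l : ℕ => B k j ((z t) ^ l • (T l (x j)))) :=
        (hw t j).map (B k j) (B k j).continuous
      have h2 : B k j (g t (x j)) = ∑' l : ℕ, B k j ((z t) ^ l • (T l (x j))) := by
        rw [hgx t j]
        exact (B k j).map_tsum (hw t j)
      calc (inner ℂ (B k j (g t (x j))) (y k) : ℂ)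
          = ((innerSL ℂ).flip (y k)) (∑' l : ℕ, B k j ((z t) ^ l • (T l (x j)))) := by
            rw [h2]; simp
        _ = ∑' l : ℕ, ((innerSL ℂ).flip (y k)) (B k j ((z t) ^ l • (T l (x j)))) :=
            ContinuousLinearMap.map_tsum _ hw2
        _ = ∑' l : ℕ, (starRingEnd ℂ) ((z t) ^ l) * a k j l := by
            refine tsum_congr fun l => ?_
            simp [hadef, _root_.map_smul, inner_smul_left]
    -- the oscillating integrand
    set f : ℕ → ℕ → ℝ → ℂ := fun k j t =>
      Complex.exp (((((j:ℤ) - (k:ℤ)) : ℤ):ℂ) * t * Complex.I) *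
        (inner ℂ (B k j (g t (x j))) (y k) : ℂ) with hfdef
    have hconjz : ∀ t, (starRingEnd ℂ) (z t) = (r:ℂ) * Complex.exp (-((t:ℂ) * Complex.I)) := by
      intro t
      simp only [hzdef, map_mul, ← Complex.exp_conj, Complex.conj_ofReal]
      congr 2
      simp [Complex.conj_I, Complex.conj_ofReal]
    have hfA : ∀ (k j : ℕ) (t : ℝ), f k j t =
        ∑' l : ℕ, Complex.exp (((((j:ℤ) - (k:ℤ) - (l:ℤ)) : ℤ):ℂ) * t * Complex.I) *
          ((r:ℂ)^l * a k j l) := by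
      intro k j t
      rw [hfdef]
      simp only
      rw [h3 t k j, ← tsum_mul_left]
      refine tsum_congr fun l => ?_
      rw [map_pow, hconjz t, mul_pow, ← Complex.exp_nat_mul]
      rw [show (((((j:ℤ) - (k:ℤ) - (l:ℤ)) : ℤ):ℂ) * t * Complex.I)
            = ((((j:ℤ) - (k:ℤ)) : ℤ):ℂ) * t * Complex.I + (l:ℂ) * -((t:ℂ) * Complex.I) from by
          push_cast; ring, Complex.exp_add]
      ring
    have hfcont : ∀ k j : ℕ, Continuous (f k j) := by
      intro k j
      apply Continuous.mul
      · fun_prop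
      · apply Continuous.inner
        · exact (B k j).continuous.comp
            ((ContinuousLinearMap.apply ℂ H (x j)).continuous.comp hg_cont)
        · exact continuous_const
    -- the integral of each f k j
    have hIB : ∀ k j : ℕ, (∫ t in (-π)..π, f k j t)
        = (2*π:ℂ) * (if k ≤ j then (r:ℂ)^(j-k) * a k j (j-k) else 0) := by
      intro k j
      rw [show (∫ t in (-π)..π, f k j t) = ∫ t in (-π)..π, ∑' l : ℕ,
          Complex.exp (((((j:ℤ) - (k:ℤ) - (l:ℤ)) : ℤ):ℂ) * t * Complex.I) *
            ((r:ℂ)^l * a k j l) from intervalIntegral.integral_congr fun t _ => hfA k j t]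
      have hnorm : ∀ (l : ℕ) (t : ℝ),
          ‖Complex.exp (((((j:ℤ) - (k:ℤ) - (l:ℤ)) : ℤ):ℂ) * t * Complex.I) *
            ((r:ℂ)^l * a k j l)‖ = r ^ l * ‖a k j l‖ := by
        intro l t
        rw [norm_mul, norm_mul, norm_pow]
        have h1 : ‖Complex.exp (((((j:ℤ) - (k:ℤ) - (l:ℤ)) : ℤ):ℂ) * t * Complex.I)‖ = 1 := by
          rw [Complex.norm_exp]
          simp
        rw [h1, one_mul]
        norm_num [abs_of_pos hr0]
      have hKn : ∀ l : ℕ, ‖a k j l‖ ≤ ‖B k j‖ * M' * ‖x j‖ * ‖y k‖ := by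
        intro l
        calc ‖a k j l‖ ≤ ‖B k j (T l (x j))‖ * ‖y k‖ := norm_inner_le_norm _ _
          _ ≤ (‖B k j‖ * ‖T l (x j)‖) * ‖y k‖ :=
              mul_le_mul_of_nonneg_right ((B k j).le_opNorm _) (norm_nonneg _)
          _ ≤ (‖B k j‖ * (M' * ‖x j‖)) * ‖y k‖ := by
              apply mul_le_mul_of_nonneg_right _ (norm_nonneg _)
              apply mul_le_mul_of_nonneg_left _ (norm_nonneg _)
              exact le_trans ((T l).le_opNorm (x j))
                (mul_le_mul_of_nonneg_right (hM' l) (norm_nonneg _))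
          _ = ‖B k j‖ * M' * ‖x j‖ * ‖y k‖ := by ring
      have hcontl : ∀ l : ℕ, Continuous (fun t : ℝ =>
          Complex.exp (((((j:ℤ) - (k:ℤ) - (l:ℤ)) : ℤ):ℂ) * t * Complex.I) *
            ((r:ℂ)^l * a k j l)) := by
        intro l; fun_prop
      rw [intervalIntegral.integral_of_le hπ]
      rw [← MeasureTheory.integral_tsum_of_summable_integral_norm
        (fun l => ((hcontl l).integrableOn_Ioc))
        (by
          apply Summable.of_nonneg_of_le (fun l => MeasureTheory.integral_nonneg (fun t => norm_nonneg _))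
            (fun l => ?_)
            ((hgeo.mul_left ((MeasureTheory.volume (Set.Ioc (-π) π)).toReal *
              (‖B k j‖ * M' * ‖x j‖ * ‖y k‖))))
          calc (∫ t in Set.Ioc (-π) π,
                ‖Complex.exp (((((j:ℤ) - (k:ℤ) - (l:ℤ)) : ℤ):ℂ) * t * Complex.I) *
                  ((r:ℂ)^l * a k j l)‖)
              = ∫ _t in Set.Ioc (-π) π, r ^ l * ‖a k j l‖ := by
                apply MeasureTheory.integral_congr_ae; filter_upwards with t; rw [hnorm l t]
            _ = (MeasureTheory.volume (Set.Ioc (-π) π)).toReal * (r ^ l * ‖a k j l‖) := by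
                rw [MeasureTheory.integral_const]; simp [ENNReal.toReal_ofReal']
            _ ≤ (MeasureTheory.volume (Set.Ioc (-π) π)).toReal * (‖B k j‖ * M' * ‖x j‖ * ‖y k‖) * r ^ l := by
                rw [mul_comm (r ^ l) _, ← mul_assoc]
                gcongr
                exact hKn l)]
      have hterm : ∀ l : ℕ,
          (∫ t in Set.Ioc (-π) π,
            Complex.exp (((((j:ℤ) - (k:ℤ) - (l:ℤ)) : ℤ):ℂ) * t * Complex.I) *
              ((r:ℂ)^l * a k j l))
          = (if ((j:ℤ) - (k:ℤ) - (l:ℤ)) = 0 then (2*π:ℂ) else 0) * ((r:ℂ)^l * a k j l) := by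
        intro l
        rw [← intervalIntegral.integral_of_le hπ,
          intervalIntegral.integral_mul_const, integral_exp_int_mul_aux]
      rw [tsum_congr hterm]
      rcases le_or_gt k j with hkj | hkj
      · rw [if_pos hkj]
        rw [tsum_eq_single (j - k) (fun l hl => ?_)]
        · rw [if_pos (by omega)]
        · rw [if_neg (by omega), zero_mul]
      · rw [if_neg (by omega), mul_zero]
        calc ∑' (l:ℕ), (if ((j:ℤ) - (k:ℤ) - (l:ℤ)) = 0 then (2*π:ℂ) else 0) * ((r:ℂ)^l * a k j l)
            = ∑' (_l:ℕ), (0:ℂ) := tsum_congr fun l => by rw [if_neg (by omega), zero_mul]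
          _ = 0 := tsum_zero
    -- each f k j t arises from the Schur bilinear form
    have hentry : ∀ (t : ℝ) (k j : ℕ),
        (inner ℂ (B k j (g t (Complex.exp (-((j:ℕ):ℂ) * t * Complex.I) • x j)))
          (Complex.exp (-((k:ℕ):ℂ) * t * Complex.I) • y k) : ℂ) = f k j t := by
      intro t k j
      rw [_root_.map_smul (g t), _root_.map_smul (B k j), inner_smul_left, inner_smul_right]
      rw [hfdef]
      simp only
      rw [← mul_assoc]
      congr 1
      rw [← Complex.exp_conj]
      rw [show (starRingEnd ℂ) (-((j:ℕ):ℂ) * t * Complex.I) = ((j:ℕ):ℂ) * t * Complex.I from by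
        simp [map_mul, Complex.conj_I, Complex.conj_ofReal]]
      rw [← Complex.exp_add]
      congr 1
      push_cast
      ring
    set Φ : ℝ → ℂ := fun t => ∑ k ∈ G, ∑ j ∈ F, f k j t with hΦdef
    have hΦbound : ∀ t : ℝ, ‖Φ t‖ ≤ D * X * Y * ‖g t‖ := by
      intro t
      have h1 := hB F G (fun j => g t (Complex.exp (-((j:ℕ):ℂ) * t * Complex.I) • x j))
        (fun k => Complex.exp (-((k:ℕ):ℂ) * t * Complex.I) • y k)
      rw [show (∑ k ∈ G, ∑ j ∈ F,
          (inner ℂ (B k j (g t (Complex.exp (-((j:ℕ):ℂ) * t * Complex.I) • x j)))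
            (Complex.exp (-((k:ℕ):ℂ) * t * Complex.I) • y k) : ℂ)) = Φ t from
        Finset.sum_congr rfl fun k _ => Finset.sum_congr rfl fun j _ => hentry t k j] at h1
      have hexp1 : ∀ m : ℕ, ‖Complex.exp (-((m:ℕ):ℂ) * t * Complex.I)‖ = 1 := by
        intro m
        rw [Complex.norm_exp]
        simp
      have h2 : Real.sqrt (∑ k ∈ G, ‖Complex.exp (-((k:ℕ):ℂ) * t * Complex.I) • y k‖ ^ 2)
          = Y := by
        rw [hYdef]
        congr 1
        refine Finset.sum_congr rfl fun k _ => ?_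
        rw [norm_smul, hexp1 k, one_mul]
      have h3' : Real.sqrt (∑ j ∈ F,
          ‖g t (Complex.exp (-((j:ℕ):ℂ) * t * Complex.I) • x j)‖ ^ 2) ≤ ‖g t‖ * X := by
        have step : ∀ j ∈ F, ‖g t (Complex.exp (-((j:ℕ):ℂ) * t * Complex.I) • x j)‖ ^ 2
            ≤ ‖g t‖ ^ 2 * ‖x j‖ ^ 2 := by
          intro j _
          rw [← mul_pow]
          apply pow_le_pow_left₀ (norm_nonneg _)
          calc ‖g t (Complex.exp (-((j:ℕ):ℂ) * t * Complex.I) • x j)‖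
              ≤ ‖g t‖ * ‖Complex.exp (-((j:ℕ):ℂ) * t * Complex.I) • x j‖ := (g t).le_opNorm _
            _ = ‖g t‖ * ‖x j‖ := by rw [norm_smul, hexp1 j, one_mul]
        calc Real.sqrt (∑ j ∈ F,
              ‖g t (Complex.exp (-((j:ℕ):ℂ) * t * Complex.I) • x j)‖ ^ 2)
            ≤ Real.sqrt (∑ j ∈ F, ‖g t‖ ^ 2 * ‖x j‖ ^ 2) :=
              Real.sqrt_le_sqrt (Finset.sum_le_sum step)
          _ = ‖g t‖ * X := by
              rw [← Finset.mul_sum, Real.sqrt_mul (sq_nonneg _), Real.sqrt_sq (norm_nonneg _),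
                hXdef]
      calc ‖Φ t‖ ≤ D * Real.sqrt (∑ j ∈ F,
            ‖g t (Complex.exp (-((j:ℕ):ℂ) * t * Complex.I) • x j)‖ ^ 2) *
            Real.sqrt (∑ k ∈ G, ‖Complex.exp (-((k:ℕ):ℂ) * t * Complex.I) • y k‖ ^ 2) := h1
        _ = D * Real.sqrt (∑ j ∈ F,
            ‖g t (Complex.exp (-((j:ℕ):ℂ) * t * Complex.I) • x j)‖ ^ 2) * Y := by rw [h2]
        _ ≤ D * (‖g t‖ * X) * Y := by
            apply mul_le_mul_of_nonneg_right _ hY0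
            exact mul_le_mul_of_nonneg_left h3' hD
        _ = D * X * Y * ‖g t‖ := by ring
    have hΦcont : Continuous Φ :=
      continuous_finset_sum _ fun k _ => continuous_finset_sum _ fun j _ => hfcont k j
    have heq : (∫ t in (-π)..π, Φ t) = (2*π:ℂ) * S r := by
      rw [hΦdef]
      simp only
      rw [intervalIntegral.integral_finset_sum (fun k _ =>
        (continuous_finset_sum _ fun j _ => hfcont k j).intervalIntegrable _ _)]
      rw [Finset.sum_congr rfl (fun k _ => intervalIntegral.integral_finset_sum
        (fun j _ => (hfcont k j).intervalIntegrable _ _))]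
      rw [hSdef]
      simp only
      rw [Finset.mul_sum]
      refine Finset.sum_congr rfl fun k _ => ?_
      rw [Finset.mul_sum]
      exact Finset.sum_congr rfl fun j _ => hIB k j
    have hnorm2π : ‖(2*π:ℂ)‖ = 2*π := by
      rw [show (2*π:ℂ) = ((2*π:ℝ):ℂ) from by push_cast; ring, Complex.norm_real,
        Real.norm_eq_abs, abs_of_pos (by positivity)]
    have h2πpos : (0:ℝ) < 2*π := by positivity
    have hSnorm : ‖S r‖ = (2*π)⁻¹ * ‖∫ t in (-π)..π, Φ t‖ := by
      rw [heq, norm_mul, hnorm2π, ← mul_assoc, inv_mul_cancel₀ (ne_of_gt h2πpos), one_mul]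
    have hgn : (2 * π)⁻¹ * (∫ t in (-π)..π, ‖g t‖) ≤ C := hH1 r hr0 hr1
    have hgint : (0:ℝ) ≤ ∫ t in (-π)..π, ‖g t‖ :=
      intervalIntegral.integral_nonneg hπ (fun t _ => norm_nonneg _)
    calc ‖S r‖ = (2*π)⁻¹ * ‖∫ t in (-π)..π, Φ t‖ := hSnorm
      _ ≤ (2*π)⁻¹ * ∫ t in (-π)..π, ‖Φ t‖ := by
          apply mul_le_mul_of_nonneg_left _ (by positivity)
          exact intervalIntegral.norm_integral_le_integral_norm hπ
      _ ≤ (2*π)⁻¹ * ∫ t in (-π)..π, (D * X * Y) * ‖g t‖ := by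
          apply mul_le_mul_of_nonneg_left _ (by positivity)
          apply intervalIntegral.integral_mono_on hπ
            (hΦcont.norm.intervalIntegrable _ _)
            ((continuous_const.mul hg_cont.norm).intervalIntegrable _ _)
          exact fun t _ => hΦbound t
      _ = (D * X * Y) * ((2*π)⁻¹ * ∫ t in (-π)..π, ‖g t‖) := by
          rw [intervalIntegral.integral_const_mul]
          ring
      _ ≤ (D * X * Y) * C := by
          apply mul_le_mul_of_nonneg_left hgn (by positivity)
      _ = C * D * X * Y := by ring
  -- Step 3: pass to the limit r → 1⁻
  have hcont : Continuous S := by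
    apply continuous_finset_sum
    intro k _
    apply continuous_finset_sum
    intro j _
    split_ifs with h
    · exact (Complex.continuous_ofReal.pow _).mul continuous_const
    · exact continuous_const
  have hne : (nhdsWithin (1:ℝ) (Set.Ioo 0 1)).NeBot := by
    apply mem_closure_iff_nhdsWithin_neBot.mp
    rw [closure_Ioo (by norm_num : (0:ℝ) ≠ 1)]
    exact Set.right_mem_Icc.mpr (by norm_num)
  have htend : Tendsto (fun r => ‖S r‖) (nhdsWithin (1:ℝ) (Set.Ioo 0 1)) (nhds ‖S 1‖) :=
    ((hcont.tendsto 1).mono_left nhdsWithin_le_nhds).norm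
  rw [hgoal]
  refine le_of_tendsto htend ?_
  filter_upwards [self_mem_nhdsWithin] with r hr
  exact key r hr
end
end

section
/- Let A = (T_{j−k}) be an upper triangular Toeplitz matrix with entries in B(H) with sup_{l≥0}‖T_l‖ < ∞, and G_A(z) = ∑_{l≥0}T_l z^l. Then A ∈ B(ℓ²(H)) if and only if G_A ∈ H^∞(𝔻, B(H)), and in that case ‖A‖_{B(ℓ²(H))} = sup_{|z|<1}‖G_A(z)‖_{B(H)}. -/
open Finset Filter

set_option linter.unusedSectionVars false
set_option maxHeartbeats 1000000

noncomputable section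

variable {H : Type*} [NormedAddCommGroup H] [InnerProductSpace ℂ H]
  [CompleteSpace H] [TopologicalSpace.SeparableSpace H]

namespace ToepAux

/-- Summability of the power series of operators. -/
lemma summable_op (T : ℕ → (H →L[ℂ] H)) {M : ℝ} (hM : ∀ l, ‖T l‖ ≤ M) {z : ℂ}
    (hz : ‖z‖ < 1) : Summable fun l : ℕ => z ^ l • T l := by
  refine Summable.of_norm_bounded
    ((summable_geometric_of_lt_one (norm_nonneg z) hz).mul_left M) (fun l => ?_)
  rw [norm_smul, norm_pow, mul_comm]
  have h0 : (0:ℝ) ≤ ‖z‖ ^ l := pow_nonneg (norm_nonneg z) l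
  exact mul_le_mul_of_nonneg_right (hM l) h0

lemma hasSum_inner_G (T : ℕ → (H →L[ℂ] H)) {M : ℝ} (hM : ∀ l, ‖T l‖ ≤ M) {z : ℂ}
    (hz : ‖z‖ < 1) (u v : H) :
    HasSum (fun l : ℕ => (starRingEnd ℂ) z ^ l * (inner ℂ ((T l) u) v : ℂ))
      (inner ℂ ((∑' l : ℕ, z ^ l • T l) u) v : ℂ) := by
  have h1 : HasSum (fun l : ℕ => z ^ l • T l) (∑' l : ℕ, z ^ l • T l) :=
    (summable_op T hM hz).hasSum
  have h2 : HasSum (fun l : ℕ => (z ^ l • T l) u) ((∑' l : ℕ, z ^ l • T l) u) :=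
    h1.mapL (ContinuousLinearMap.apply ℂ H u)
  have φcont : Continuous fun w : H => (inner ℂ w v : ℂ) :=
    continuous_id.inner continuous_const
  have h3 := h2.map (AddMonoidHom.mk' (fun w : H => (inner ℂ w v : ℂ))
    (fun a b => inner_add_left a b v)) φcont
  have h4 : ((AddMonoidHom.mk' (fun w : H => (inner ℂ w v : ℂ))
      (fun a b => inner_add_left a b v)) ∘ (fun l : ℕ => (z ^ l • T l) u))
      = fun l : ℕ => (starRingEnd ℂ) z ^ l * (inner ℂ ((T l) u) v : ℂ) := by
    funext l
    simp [Function.comp, ContinuousLinearMap.smul_apply, inner_smul_left, map_pow]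
    exact mul_comm _ _
  rwa [h4] at h3


/-- tail bound for geometric-dominated series -/
lemma tail_bound {c : ℕ → ℂ} {K r : ℝ} (hr0 : 0 ≤ r) (hr1 : r < 1)
    (hc : ∀ l, ‖c l‖ ≤ K * r ^ l) (m : ℕ) :
    ‖∑' l : ℕ, c (l + m)‖ ≤ K * r ^ m * (1 - r)⁻¹ := by
  have hgeo : HasSum (fun i : ℕ => (K * r ^ m) * r ^ i) ((K * r ^ m) * (1 - r)⁻¹) :=
    (hasSum_geometric_of_lt_one hr0 hr1).mul_left _
  refine tsum_of_norm_bounded hgeo (fun i => ?_)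
  calc ‖c (i + m)‖ ≤ K * r ^ (i + m) := hc _
    _ = K * r ^ m * r ^ i := by rw [pow_add]; ring

/-- Core lemma for the easy direction. -/
lemma core_easy {c : ℕ → ℂ} {K C : ℝ} (hK0 : 0 ≤ K) {w : ℂ} (hw : ‖w‖ < 1)
    (hc : ∀ l, ‖c l‖ ≤ K)
    (h : ∀ n : ℕ,
      ‖∑ k ∈ range n, ∑ j ∈ range n,
          (if k ≤ j then w ^ j * ((starRingEnd ℂ) w ^ k * c (j - k)) else 0)‖
        ≤ C * ∑ k ∈ range n, (‖w‖ ^ 2) ^ k) :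
    ‖∑' l : ℕ, w ^ l * c l‖ ≤ C := by
  have hr0 : 0 ≤ ‖w‖ := norm_nonneg w
  set r : ℝ := ‖w‖ with hr
  set q : ℝ := r ^ 2 with hq
  have hq0 : 0 ≤ q := sq_nonneg r
  have hq1 : q < 1 := pow_lt_one₀ hr0 hw (two_ne_zero)
  have hfc : ∀ l, ‖w ^ l * c l‖ ≤ K * r ^ l := fun l => by
    rw [norm_mul, norm_pow, mul_comm]
    exact mul_le_mul_of_nonneg_right (hc l) (pow_nonneg hr0 l)
  have hsum : Summable fun l : ℕ => w ^ l * c l :=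
    Summable.of_norm_bounded ((summable_geometric_of_lt_one hr0 hw).mul_left K) hfc
  set S : ℂ := ∑' l : ℕ, w ^ l * c l with hS
  set P : ℕ → ℂ := fun m => ∑ l ∈ range m, w ^ l * c l with hP
  -- tail estimate
  have htail : ∀ m : ℕ, ‖S - P m‖ ≤ K * r ^ m * (1 - r)⁻¹ := by
    intro m
    have h0 := Summable.sum_add_tsum_nat_add (f := fun l => w ^ l * c l) m hsum
    have h1 : S - P m = ∑' l : ℕ, w ^ (l + m) * c (l + m) := (eq_sub_of_add_eq' h0).symm
    rw [h1]
    exact tail_bound hr0 hw (fun l => hfc l) m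
  -- double sum rewrite
  have hdouble : ∀ n : ℕ,
      ∑ k ∈ range n, ∑ j ∈ range n,
          (if k ≤ j then w ^ j * ((starRingEnd ℂ) w ^ k * c (j - k)) else 0)
        = ∑ k ∈ range n, (((q : ℝ) : ℂ)) ^ k * P (n - k) := by
    intro n
    refine Finset.sum_congr rfl fun k hk => ?_
    have hfilter : (range n).filter (fun j => k ≤ j) = Ico k n := by
      ext j; simp [Finset.mem_filter, Finset.mem_range, Finset.mem_Ico, and_comm]
    rw [← Finset.sum_filter, hfilter, Finset.sum_Ico_eq_sum_range]
    have hQ : (((q:ℝ)):ℂ) = (w * (starRingEnd ℂ) w) := by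
      rw [Complex.mul_conj, ← Complex.sq_norm, hq, hr]
    rw [hP, Finset.mul_sum]
    refine Finset.sum_congr rfl fun l hl => ?_
    have hkl : k + l - k = l := by omega
    rw [hkl, hQ, pow_add]
    ring
  -- main estimate for each n
  set t : ℕ → ℝ := fun n => ∑ k ∈ range n, q ^ k with ht
  have ht0 : ∀ n, 0 ≤ t n := fun n => Finset.sum_nonneg fun k _ => pow_nonneg hq0 k
  have htle : ∀ n : ℕ, ∑ k ∈ range n, r ^ k ≤ (1 - r)⁻¹ := fun n =>
    (Summable.sum_le_tsum (range n) (fun k _ => pow_nonneg hr0 k)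
      (summable_geometric_of_lt_one hr0 hw)).trans
      (le_of_eq (tsum_geometric_of_lt_one hr0 hw))
  have h1r : (0:ℝ) < 1 - r := by linarith
  have hest : ∀ n : ℕ, t n * ‖S‖ ≤ C * t n + (K * (1 - r)⁻¹ * (1 - r)⁻¹) * r ^ n := by
    intro n
    have hcast : ((t n : ℝ) : ℂ) = ∑ k ∈ range n, (((q:ℝ)):ℂ) ^ k := by
      rw [ht]; push_cast; rfl
    have hdiff : ‖((t n : ℝ) : ℂ) * S - ∑ k ∈ range n, (((q:ℝ)):ℂ) ^ k * P (n - k)‖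
        ≤ (K * (1 - r)⁻¹ * (1 - r)⁻¹) * r ^ n := by
      rw [hcast, Finset.sum_mul, ← Finset.sum_sub_distrib]
      have hterm : ∀ k ∈ range n,
          ‖(((q:ℝ)):ℂ) ^ k * S - (((q:ℝ)):ℂ) ^ k * P (n - k)‖
            ≤ (K * (1 - r)⁻¹ * r ^ n) * r ^ k := by
        intro k hk
        have hkn : k < n := mem_range.mp hk
        rw [← mul_sub, norm_mul, norm_pow, Complex.norm_real, Real.norm_eq_abs,
          abs_of_nonneg hq0]
        calc q ^ k * ‖S - P (n - k)‖ ≤ q ^ k * (K * r ^ (n - k) * (1 - r)⁻¹) := by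
              exact mul_le_mul_of_nonneg_left (htail (n - k)) (pow_nonneg hq0 k)
          _ = (K * (1 - r)⁻¹ * r ^ n) * r ^ k := by
              rw [hq, ← pow_mul]
              have hpow : r ^ (2 * k) * r ^ (n - k) = r ^ n * r ^ k := by
                rw [← pow_add, ← pow_add]; congr 1; omega
              calc r ^ (2 * k) * (K * r ^ (n - k) * (1 - r)⁻¹)
                  = (r ^ (2 * k) * r ^ (n - k)) * (K * (1 - r)⁻¹) := by ring
                _ = (r ^ n * r ^ k) * (K * (1 - r)⁻¹) := by rw [hpow]
                _ = (K * (1 - r)⁻¹ * r ^ n) * r ^ k := by ring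
      calc ‖∑ k ∈ range n, ((((q:ℝ)):ℂ) ^ k * S - (((q:ℝ)):ℂ) ^ k * P (n - k))‖
          ≤ ∑ k ∈ range n, ‖(((q:ℝ)):ℂ) ^ k * S - (((q:ℝ)):ℂ) ^ k * P (n - k)‖ :=
            norm_sum_le _ _
        _ ≤ ∑ k ∈ range n, (K * (1 - r)⁻¹ * r ^ n) * r ^ k :=
            Finset.sum_le_sum hterm
        _ = (K * (1 - r)⁻¹ * r ^ n) * ∑ k ∈ range n, r ^ k := by rw [Finset.mul_sum]
        _ ≤ (K * (1 - r)⁻¹ * r ^ n) * (1 - r)⁻¹ := by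
            refine mul_le_mul_of_nonneg_left (htle n) ?_
            positivity
        _ = (K * (1 - r)⁻¹ * (1 - r)⁻¹) * r ^ n := by ring
    have hnormt : ‖((t n : ℝ) : ℂ) * S‖ = t n * ‖S‖ := by
      rw [norm_mul, Complex.norm_real, Real.norm_eq_abs, abs_of_nonneg (ht0 n)]
    have htri : ‖((t n : ℝ) : ℂ) * S‖
        ≤ ‖∑ k ∈ range n, (((q:ℝ)):ℂ) ^ k * P (n - k)‖
          + ‖((t n : ℝ) : ℂ) * S - ∑ k ∈ range n, (((q:ℝ)):ℂ) ^ k * P (n - k)‖ := by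
      exact norm_le_norm_add_norm_sub' _ _
    have hmain : ‖∑ k ∈ range n, (((q:ℝ)):ℂ) ^ k * P (n - k)‖ ≤ C * t n := by
      have := h n
      rw [hdouble n] at this
      simpa [ht, hr, hq] using this
    rw [hnormt] at htri
    linarith [htri, hdiff, hmain]
  -- pass to the limit
  have hgeo : Filter.Tendsto t Filter.atTop (nhds ((1 - q)⁻¹)) :=
    (hasSum_geometric_of_lt_one hq0 hq1).tendsto_sum_nat
  have hpow0 : Filter.Tendsto (fun n : ℕ => (K * (1 - r)⁻¹ * (1 - r)⁻¹) * r ^ n)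
      Filter.atTop (nhds 0) := by
    have := (tendsto_pow_atTop_nhds_zero_of_lt_one hr0 hw).const_mul
      (K * (1 - r)⁻¹ * (1 - r)⁻¹)
    simpa using this
  have hlim : (1 - q)⁻¹ * ‖S‖ ≤ C * (1 - q)⁻¹ := by
    have hL : Filter.Tendsto (fun n => t n * ‖S‖) Filter.atTop (nhds ((1 - q)⁻¹ * ‖S‖)) :=
      hgeo.mul_const _
    have hR : Filter.Tendsto (fun n => C * t n + (K * (1 - r)⁻¹ * (1 - r)⁻¹) * r ^ n)
        Filter.atTop (nhds (C * (1 - q)⁻¹ + 0)) :=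
      (hgeo.const_mul C).add hpow0
    rw [add_zero] at hR
    exact le_of_tendsto_of_tendsto' hL hR hest
  have h1q : (0:ℝ) < 1 - q := by linarith
  have := mul_le_mul_of_nonneg_left hlim h1q.le
  calc ‖S‖ = (1 - q) * ((1 - q)⁻¹ * ‖S‖) := by field_simp
    _ ≤ (1 - q) * (C * (1 - q)⁻¹) := mul_le_mul_of_nonneg_left hlim h1q.le
    _ = C := by field_simp


lemma norm_inner_T_le (T : ℕ → (H →L[ℂ] H)) {M : ℝ} (hM : ∀ l, ‖T l‖ ≤ M)
    (l : ℕ) (u v : H) : ‖(inner ℂ ((T l) u) v : ℂ)‖ ≤ M * (‖u‖ * ‖v‖) := by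
  calc ‖(inner ℂ ((T l) u) v : ℂ)‖ ≤ ‖(T l) u‖ * ‖v‖ := norm_inner_le_norm _ _
    _ ≤ (‖T l‖ * ‖u‖) * ‖v‖ :=
        mul_le_mul_of_nonneg_right ((T l).le_opNorm u) (norm_nonneg v)
    _ ≤ (M * ‖u‖) * ‖v‖ := by
        have := mul_le_mul_of_nonneg_right (hM l) (norm_nonneg u)
        exact mul_le_mul_of_nonneg_right this (norm_nonneg v)
    _ = M * (‖u‖ * ‖v‖) := by ring

lemma opnorm_le (T : ℕ → (H →L[ℂ] H)) {M : ℝ} (hM : ∀ l, ‖T l‖ ≤ M) {C : ℝ} (hC : 0 ≤ C)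
    (hS : SchurBoundedBy (fun k j => if k ≤ j then T (j - k) else 0) C)
    (z : ℂ) (hz : ‖z‖ < 1) : ‖∑' l : ℕ, z ^ l • T l‖ ≤ C := by
  have hM0 : 0 ≤ M := le_trans (norm_nonneg _) (hM 0)
  refine ContinuousLinearMap.opNorm_le_bound _ hC (fun u => ?_)
  have key : ∀ v : H, ‖(inner ℂ ((∑' l : ℕ, z ^ l • T l) u) v : ℂ)‖ ≤ C * ‖u‖ * ‖v‖ := by
    intro v
    have hhs := hasSum_inner_G T hM hz u v
    rw [← hhs.tsum_eq]
    have hwlt : ‖(starRingEnd ℂ) z‖ < 1 := by rwa [RCLike.norm_conj]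
    have happ := core_easy (c := fun l => (inner ℂ ((T l) u) v : ℂ))
      (K := M * (‖u‖ * ‖v‖)) (C := C * ‖u‖ * ‖v‖)
      (by positivity) hwlt (fun l => norm_inner_T_le T hM l u v) ?_
    · calc ‖∑' l : ℕ, (starRingEnd ℂ) z ^ l * (inner ℂ ((T l) u) v : ℂ)‖
          ≤ C * ‖u‖ * ‖v‖ := happ
        _ = C * ‖u‖ * ‖v‖ := rfl
    · -- the Schur bound instantiated
      intro n
      have hinst := hS (range n) (range n) (fun j => z ^ j • u) (fun k => z ^ k • v)
      have hLHS : ∑ k ∈ range n, ∑ j ∈ range n,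
          (inner ℂ (((fun k j => if k ≤ j then T (j - k) else 0) : ℕ → ℕ → (H →L[ℂ] H)) k j
              ((fun j => z ^ j • u) j)) ((fun k => z ^ k • v) k) : ℂ)
          = ∑ k ∈ range n, ∑ j ∈ range n,
            (if k ≤ j then (starRingEnd ℂ) z ^ j *
              (((starRingEnd ℂ) ((starRingEnd ℂ) z)) ^ k * (inner ℂ ((T (j - k)) u) v : ℂ))
             else 0) := by
        refine Finset.sum_congr rfl fun k _ => Finset.sum_congr rfl fun j _ => ?_
        by_cases hkj : k ≤ j
        · simp only [hkj, if_true, Complex.conj_conj]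
          rw [map_smul, inner_smul_left, inner_smul_right, map_pow]
        · simp [hkj]
      have hRHS : C * Real.sqrt (∑ j ∈ range n, ‖z ^ j • u‖ ^ 2)
            * Real.sqrt (∑ k ∈ range n, ‖z ^ k • v‖ ^ 2)
          = C * ‖u‖ * ‖v‖ * ∑ k ∈ range n, (‖(starRingEnd ℂ) z‖ ^ 2) ^ k := by
        have hsum : ∀ a : H, ∑ j ∈ range n, ‖z ^ j • a‖ ^ 2
            = (∑ j ∈ range n, (‖z‖ ^ 2) ^ j) * ‖a‖ ^ 2 := by
          intro a
          rw [Finset.sum_mul]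
          refine Finset.sum_congr rfl fun j _ => ?_
          rw [norm_smul, norm_pow, mul_pow, ← pow_mul, ← pow_mul, mul_comm j 2]
        have htn : (0:ℝ) ≤ ∑ j ∈ range n, (‖z‖ ^ 2) ^ j :=
          Finset.sum_nonneg fun j _ => pow_nonneg (sq_nonneg _) j
        rw [hsum u, hsum v, Real.sqrt_mul htn, Real.sqrt_mul htn,
          Real.sqrt_sq (norm_nonneg u), Real.sqrt_sq (norm_nonneg v), RCLike.norm_conj]
        have hss := Real.mul_self_sqrt htn
        calc C * (Real.sqrt (∑ j ∈ range n, (‖z‖ ^ 2) ^ j) * ‖u‖)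
              * (Real.sqrt (∑ j ∈ range n, (‖z‖ ^ 2) ^ j) * ‖v‖)
            = C * ‖u‖ * ‖v‖ * (Real.sqrt (∑ j ∈ range n, (‖z‖ ^ 2) ^ j)
                * Real.sqrt (∑ j ∈ range n, (‖z‖ ^ 2) ^ j)) := by ring
          _ = C * ‖u‖ * ‖v‖ * ∑ j ∈ range n, (‖z‖ ^ 2) ^ j := by rw [hss]
      rw [hLHS, hRHS] at hinst
      exact hinst
  set s := (∑' l : ℕ, z ^ l • T l) u with hs
  have h2 : ‖s‖ ^ 2 ≤ C * ‖u‖ * ‖s‖ := by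
    calc ‖s‖ ^ 2 = RCLike.re (inner ℂ s s : ℂ) := (inner_self_eq_norm_sq s).symm
      _ ≤ ‖(inner ℂ s s : ℂ)‖ := RCLike.re_le_norm _
      _ ≤ C * ‖u‖ * ‖s‖ := key s
  by_contra hcon
  push_neg at hcon
  have hs0 : 0 < ‖s‖ := lt_of_le_of_lt (mul_nonneg hC (norm_nonneg u)) hcon
  nlinarith [h2]


/-- sum over N-th roots of unity -/
lemma rootsum (N : ℕ) (hN : 0 < N) (d : ℤ) :
    ∑ m ∈ range N, (Complex.exp (2 * Real.pi * Complex.I / N)) ^ ((m : ℤ) * d)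
      = if (N : ℤ) ∣ d then (N : ℂ) else 0 := by
  set ω := Complex.exp (2 * Real.pi * Complex.I / N) with hω
  have hprim : IsPrimitiveRoot ω N := Complex.isPrimitiveRoot_exp N hN.ne'
  have hterm : ∀ m : ℕ, ω ^ ((m : ℤ) * d) = (ω ^ d) ^ m := by
    intro m
    rw [mul_comm, zpow_mul, zpow_natCast]
  simp only [hterm]
  by_cases hdvd : (N : ℤ) ∣ d
  · have h1 : ω ^ d = 1 := (hprim.zpow_eq_one_iff_dvd d).mpr hdvd
    simp [h1, hdvd]
  · have h1 : ω ^ d ≠ 1 := fun hcon => hdvd ((hprim.zpow_eq_one_iff_dvd d).mp hcon)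
    rw [geom_sum_eq h1, if_neg hdvd]
    have hN1 : (ω ^ d) ^ N = 1 := by
      rw [← zpow_natCast (ω ^ d) N, ← zpow_mul, mul_comm, zpow_mul, zpow_natCast,
        hprim.pow_eq_one, one_zpow]
    rw [hN1, sub_self, zero_div]

lemma conj_omega (N : ℕ) (hN : 0 < N) :
    (starRingEnd ℂ) (Complex.exp (2 * Real.pi * Complex.I / N))
      = (Complex.exp (2 * Real.pi * Complex.I / N))⁻¹ := by
  rw [← Complex.exp_conj, ← Complex.exp_neg]
  congr 1
  simp [map_div₀, map_mul, Complex.conj_I, Complex.conj_ofReal, map_ofNat]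
  ring

lemma conj_pow_mul {ω : ℂ} (hω0 : ω ≠ 0) (hconj : (starRingEnd ℂ) ω = ω⁻¹) (a b : ℕ) :
    (starRingEnd ℂ) (ω ^ a) * ω ^ b = ω ^ ((b : ℤ) - (a : ℤ)) := by
  rw [map_pow, hconj, inv_pow, ← zpow_natCast ω a, ← zpow_natCast ω b,
    ← zpow_neg, ← zpow_add₀ hω0]
  congr 1
  ring

/-- Discrete Parseval identity. -/
lemma parseval (N n : ℕ) (hN : 0 < N) (hnN : n ≤ N) (x : ℕ → H) :
    ∑ m ∈ range N, ‖∑ j ∈ range n,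
        (Complex.exp (2 * Real.pi * Complex.I / N)) ^ (m * j) • x j‖ ^ 2
      = (N : ℝ) * ∑ j ∈ range n, ‖x j‖ ^ 2 := by
  set ω := Complex.exp (2 * Real.pi * Complex.I / N) with hω
  have hω0 : ω ≠ 0 := Complex.exp_ne_zero _
  have hconj := conj_omega N hN
  have main : ∑ m ∈ range N, (inner ℂ (∑ j ∈ range n, ω ^ (m * j) • x j)
        (∑ j ∈ range n, ω ^ (m * j) • x j) : ℂ)
      = (N : ℂ) * ∑ j ∈ range n, (inner ℂ (x j) (x j) : ℂ) := by
    have hexp : ∀ m ∈ range N, (inner ℂ (∑ j ∈ range n, ω ^ (m * j) • x j)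
          (∑ j ∈ range n, ω ^ (m * j) • x j) : ℂ)
        = ∑ i ∈ range n, ∑ j ∈ range n,
            ω ^ ((m : ℤ) * ((j : ℤ) - (i : ℤ))) * (inner ℂ (x i) (x j) : ℂ) := by
      intro m _
      rw [sum_inner]
      refine Finset.sum_congr rfl fun i _ => ?_
      rw [inner_sum]
      refine Finset.sum_congr rfl fun j _ => ?_
      rw [inner_smul_left, inner_smul_right, ← mul_assoc,
        conj_pow_mul hω0 hconj (m * i) (m * j)]
      congr 2
      push_cast
      ring
    rw [Finset.sum_congr rfl hexp, Finset.sum_comm]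
    have hinner : ∀ i ∈ range n, ∑ m ∈ range N, ∑ j ∈ range n,
          ω ^ ((m : ℤ) * ((j : ℤ) - (i : ℤ))) * (inner ℂ (x i) (x j) : ℂ)
        = (N : ℂ) * (inner ℂ (x i) (x i) : ℂ) := by
      intro i hi
      rw [Finset.sum_comm]
      have hjj : ∀ j ∈ range n, ∑ m ∈ range N,
            ω ^ ((m : ℤ) * ((j : ℤ) - (i : ℤ))) * (inner ℂ (x i) (x j) : ℂ)
          = if j = i then (N : ℂ) * (inner ℂ (x i) (x j) : ℂ) else 0 := by
        intro j hj
        rw [← Finset.sum_mul, rootsum N hN ((j : ℤ) - (i : ℤ))]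
        have hiff : ((N : ℤ) ∣ ((j : ℤ) - (i : ℤ))) ↔ j = i := by
          constructor
          · intro hdvd
            have hj' : j < n := mem_range.mp hj
            have hi' : i < n := mem_range.mp hi
            have h0 : (j : ℤ) - (i : ℤ) = 0 := by
              refine Int.eq_zero_of_abs_lt_dvd hdvd ?_
              rw [abs_lt]
              constructor <;> [omega; omega]
            omega
          · intro h; subst h; simp
        by_cases hji : j = i
        · rw [if_pos (hiff.mpr hji), if_pos hji]
        · rw [if_neg (fun hc => hji (hiff.mp hc)), if_neg hji, zero_mul]
      rw [Finset.sum_congr rfl hjj, Finset.sum_ite_eq' (range n) i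
        (fun j => (N : ℂ) * (inner ℂ (x i) (x j) : ℂ))]
      rw [if_pos hi]
    rw [Finset.sum_congr rfl hinner, Finset.mul_sum]
  have hre : ∀ m : ℕ, ‖∑ j ∈ range n, ω ^ (m * j) • x j‖ ^ 2
      = RCLike.re (inner ℂ (∑ j ∈ range n, ω ^ (m * j) • x j)
          (∑ j ∈ range n, ω ^ (m * j) • x j) : ℂ) :=
    fun m => (inner_self_eq_norm_sq _).symm
  calc ∑ m ∈ range N, ‖∑ j ∈ range n, ω ^ (m * j) • x j‖ ^ 2
      = RCLike.re (∑ m ∈ range N, (inner ℂ (∑ j ∈ range n, ω ^ (m * j) • x j)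
          (∑ j ∈ range n, ω ^ (m * j) • x j) : ℂ)) := by
        rw [map_sum]
        exact Finset.sum_congr rfl fun m _ => hre m
    _ = RCLike.re ((N : ℂ) * ∑ j ∈ range n, (inner ℂ (x j) (x j) : ℂ)) := by rw [main]
    _ = (N : ℝ) * ∑ j ∈ range n, ‖x j‖ ^ 2 := by
        rw [RCLike.mul_re, RCLike.natCast_re, RCLike.natCast_im, zero_mul, sub_zero,
          map_sum]
        congr 1
        exact Finset.sum_congr rfl fun j _ => inner_self_eq_norm_sq (x j)


lemma dvd_lower {N n j k l : ℕ} (hnN : n ≤ N) (hj : j < n) (hk : k < n)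
    (hdvd : (N : ℤ) ∣ ((l : ℤ) + (k : ℤ) - (j : ℤ))) (hne : ¬(k ≤ j ∧ l = j - k)) :
    N - n ≤ l := by
  obtain ⟨t, ht⟩ := hdvd
  have hN1 : (0 : ℤ) ≤ (N : ℤ) := by positivity
  rcases lt_trichotomy t 0 with h3 | h3 | h3
  · have h5 := mul_le_mul_of_nonneg_left (show t ≤ -1 by omega) hN1
    have h4 : (l : ℤ) + (k : ℤ) - (j : ℤ) ≤ -(N : ℤ) := by rw [ht]; linarith
    omega
  · have h4 : (l : ℤ) + (k : ℤ) - (j : ℤ) = 0 := by rw [ht, h3, mul_zero]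
    omega
  · have h5 := mul_le_mul_of_nonneg_left (show 1 ≤ t by omega) hN1
    have h4 : (N : ℤ) ≤ (l : ℤ) + (k : ℤ) - (j : ℤ) := by rw [ht]; linarith
    omega

/-- per-entry tail estimate in the hard direction -/
lemma tail_jk {c : ℕ → ℂ} {K r : ℝ} (hK0 : 0 ≤ K) (hc : ∀ l, ‖c l‖ ≤ K)
    (hr0 : 0 ≤ r) (hr1 : r < 1)
    (N n j k : ℕ) (hnN : n ≤ N) (hj : j < n) (hk : k < n) :
    ‖(∑' l : ℕ, if (N : ℤ) ∣ ((l : ℤ) + (k : ℤ) - (j : ℤ)) then (r : ℂ) ^ l * c l else 0)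
        - (if k ≤ j then (r : ℂ) ^ (j - k) * c (j - k) else 0)‖
      ≤ K * r ^ (N - n) * (1 - r)⁻¹ := by
  have hfb : ∀ l : ℕ, ‖if (N : ℤ) ∣ ((l : ℤ) + (k : ℤ) - (j : ℤ))
      then (r : ℂ) ^ l * c l else 0‖ ≤ K * r ^ l := by
    intro l
    split_ifs with h1
    · rw [norm_mul, norm_pow, Complex.norm_real, Real.norm_eq_abs, abs_of_nonneg hr0,
        mul_comm]
      exact mul_le_mul_of_nonneg_right (hc l) (pow_nonneg hr0 l)
    · simp only [norm_zero]
      positivity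
  have hsumf : Summable (fun l : ℕ => if (N : ℤ) ∣ ((l : ℤ) + (k : ℤ) - (j : ℤ))
      then (r : ℂ) ^ l * c l else 0) :=
    Summable.of_norm_bounded ((summable_geometric_of_lt_one hr0 hr1).mul_left K) hfb
  have hmain : ∃ g : ℕ → ℂ, Summable g ∧ (∀ l, ‖g l‖ ≤ K * r ^ l) ∧
      (∀ l, l < N - n → g l = 0) ∧
      (∑' l : ℕ, if (N : ℤ) ∣ ((l : ℤ) + (k : ℤ) - (j : ℤ)) then (r : ℂ) ^ l * c l else 0)
        - (if k ≤ j then (r : ℂ) ^ (j - k) * c (j - k) else 0) = ∑' l, g l := by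
    by_cases hkj : k ≤ j
    · refine ⟨fun l => if l = j - k then 0
          else if (N : ℤ) ∣ ((l : ℤ) + (k : ℤ) - (j : ℤ)) then (r : ℂ) ^ l * c l else 0,
          ?_, ?_, ?_, ?_⟩
      · refine Summable.of_norm_bounded
          ((summable_geometric_of_lt_one hr0 hr1).mul_left K) (fun l => ?_)
        beta_reduce
        by_cases h1 : l = j - k
        · rw [if_pos h1, norm_zero]; positivity
        · rw [if_neg h1]; exact hfb l
      · intro l
        beta_reduce
        by_cases h1 : l = j - k
        · rw [if_pos h1, norm_zero]; positivity
        · rw [if_neg h1]; exact hfb l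
      · intro l hl
        beta_reduce
        by_cases h1 : l = j - k
        · rw [if_pos h1]
        · rw [if_neg h1, if_neg]
          intro hdvd
          have := dvd_lower hnN hj hk hdvd (fun hcon => h1 hcon.2)
          omega
      · rw [if_pos hkj]
        have h0 : (N : ℤ) ∣ (((j - k : ℕ) : ℤ) + (k : ℤ) - (j : ℤ)) := by
          have h00 : ((j - k : ℕ) : ℤ) + (k : ℤ) - (j : ℤ) = 0 := by omega
          rw [h00]
          exact dvd_zero _
        have heq := Summable.tsum_eq_add_tsum_ite hsumf (j - k)
        have hfl : (if (N : ℤ) ∣ (((j - k : ℕ) : ℤ) + (k : ℤ) - (j : ℤ))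
            then (r : ℂ) ^ (j - k) * c (j - k) else 0) = (r : ℂ) ^ (j - k) * c (j - k) :=
          if_pos h0
        rw [heq, hfl, add_sub_cancel_left]
    · refine ⟨_, hsumf, hfb, ?_, ?_⟩
      · intro l hl
        rw [if_neg]
        intro hdvd
        have := dvd_lower hnN hj hk hdvd (fun hcon => hkj hcon.1)
        omega
      · rw [if_neg hkj, sub_zero]
  obtain ⟨g, hgsum, hgb, hg0, hgeq⟩ := hmain
  rw [hgeq]
  have hshift := Summable.sum_add_tsum_nat_add (f := g) (N - n) hgsum
  have hzero : ∑ i ∈ range (N - n), g i = 0 :=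
    Finset.sum_eq_zero fun i hi => hg0 i (mem_range.mp hi)
  rw [hzero, zero_add] at hshift
  rw [← hshift]
  have hgeo : HasSum (fun i : ℕ => (K * r ^ (N - n)) * r ^ i)
      ((K * r ^ (N - n)) * (1 - r)⁻¹) :=
    (hasSum_geometric_of_lt_one hr0 hr1).mul_left _
  refine tsum_of_norm_bounded hgeo (fun i => ?_)
  calc ‖g (i + (N - n))‖ ≤ K * r ^ (i + (N - n)) := hgb _
    _ = K * r ^ (N - n) * r ^ i := by rw [pow_add]; ring


/-- main estimate of the hard direction, at radius r and truncation N -/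
lemma hard_bound (T : ℕ → (H →L[ℂ] H)) {M : ℝ} (hM : ∀ l, ‖T l‖ ≤ M) {C : ℝ} (hC : 0 ≤ C)
    (hG : ∀ z : ℂ, ‖z‖ < 1 → ‖∑' l : ℕ, z ^ l • T l‖ ≤ C)
    (n : ℕ) (x y : ℕ → H) {r : ℝ} (hr0 : 0 ≤ r) (hr1 : r < 1) {N : ℕ} (hnN : n ≤ N)
    (hN : 0 < N) :
    ‖∑ j ∈ range n, ∑ k ∈ range n,
        (if k ≤ j then (r : ℂ) ^ (j - k) * (inner ℂ ((T (j - k)) (x j)) (y k) : ℂ) else 0)‖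
      ≤ C * Real.sqrt (∑ j ∈ range n, ‖x j‖ ^ 2) * Real.sqrt (∑ k ∈ range n, ‖y k‖ ^ 2)
        + M * ((∑ j ∈ range n, ‖x j‖) * (∑ k ∈ range n, ‖y k‖))
          * (r ^ (N - n) * (1 - r)⁻¹) := by
  have hM0 : 0 ≤ M := le_trans (norm_nonneg _) (hM 0)
  set ω := Complex.exp (2 * Real.pi * Complex.I / N) with hω
  have hω0 : ω ≠ 0 := Complex.exp_ne_zero _
  have hconj : (starRingEnd ℂ) ω = ω⁻¹ := conj_omega N hN
  have hωabs : ‖ω‖ = 1 := by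
    have h1 : 2 * (Real.pi : ℂ) * Complex.I / N = ((2 * Real.pi / N : ℝ) : ℂ) * Complex.I := by
      push_cast; ring
    rw [hω, h1, Complex.norm_exp_ofReal_mul_I]
  -- test points and vectors
  set z : ℕ → ℂ := fun m => (r : ℂ) * (starRingEnd ℂ) (ω ^ m) with hz
  have hznorm : ∀ m, ‖z m‖ < 1 := by
    intro m
    rw [hz]
    simp only
    rw [norm_mul, RCLike.norm_conj, norm_pow, hωabs, one_pow, mul_one, Complex.norm_real,
      Real.norm_eq_abs, abs_of_nonneg hr0]
    exact hr1
  have hconjz : ∀ m : ℕ, (starRingEnd ℂ) (z m) = (r : ℂ) * ω ^ m := by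
    intro m
    rw [hz]
    simp only [map_mul, Complex.conj_conj, Complex.conj_ofReal]
  set f : ℕ → H := fun m => ∑ j ∈ range n, ω ^ (m * j) • x j with hf
  set g : ℕ → H := fun m => ∑ k ∈ range n, ω ^ (m * k) • y k with hg
  have hcb : ∀ l j k : ℕ, ‖(inner ℂ ((T l) (x j)) (y k) : ℂ)‖ ≤ M * (‖x j‖ * ‖y k‖) :=
    fun l j k => norm_inner_T_le T hM l (x j) (y k)
  -- Summability of the indicator series
  have hSsummand : ∀ j k : ℕ, Summable (fun l : ℕ =>
      if (N : ℤ) ∣ ((l : ℤ) + (k : ℤ) - (j : ℤ)) then (r : ℂ) ^ l * (inner ℂ ((T l) (x j)) (y k) : ℂ) else 0) := by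
    intro j k
    refine Summable.of_norm_bounded (g := fun l => (M * (‖x j‖ * ‖y k‖)) * r ^ l)
      ((summable_geometric_of_lt_one hr0 hr1).mul_left _) (fun l => ?_)
    split_ifs with h1
    · rw [norm_mul, norm_pow, Complex.norm_real, Real.norm_eq_abs, abs_of_nonneg hr0,
        mul_comm]
      exact mul_le_mul_of_nonneg_right (hcb l j k) (pow_nonneg hr0 l)
    · simp only [norm_zero]; positivity
  set S : ℕ → ℕ → ℂ := fun j k => ∑' l : ℕ,
      if (N : ℤ) ∣ ((l : ℤ) + (k : ℤ) - (j : ℤ)) then (r : ℂ) ^ l * (inner ℂ ((T l) (x j)) (y k) : ℂ) else 0 with hs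
  -- the key identity
  have hkey : ∑ m ∈ range N, (inner ℂ ((∑' l : ℕ, (z m) ^ l • T l) (f m)) (g m) : ℂ)
      = (N : ℂ) * ∑ j ∈ range n, ∑ k ∈ range n, S j k := by
    have hterm : ∀ m ∈ range N,
        (fun l : ℕ => (starRingEnd ℂ) (z m) ^ l * (inner ℂ ((T l) (f m)) (g m) : ℂ))
          = fun l : ℕ => ∑ j ∈ range n, ∑ k ∈ range n,
              (r : ℂ) ^ l * (ω ^ ((m : ℤ) * ((l : ℤ) + (k : ℤ) - (j : ℤ))) * (inner ℂ ((T l) (x j)) (y k) : ℂ)) := by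
      intro m _
      funext l
      rw [hconjz m]
      have hTf : (T l) (f m) = ∑ j ∈ range n, ω ^ (m * j) • (T l) (x j) := by
        rw [hf]; simp only [map_sum, map_smul]
      rw [hTf, sum_inner, Finset.mul_sum]
      refine Finset.sum_congr rfl fun j _ => ?_
      rw [hg, inner_sum, Finset.mul_sum]
      refine Finset.sum_congr rfl fun k _ => ?_
      rw [inner_smul_left, inner_smul_right]
      have hpow : ω ^ (m * l) * ((starRingEnd ℂ) (ω ^ (m * j)) * ω ^ (m * k))
          = ω ^ ((m : ℤ) * ((l : ℤ) + (k : ℤ) - (j : ℤ))) := by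
        rw [conj_pow_mul hω0 hconj (m * j) (m * k), ← zpow_natCast ω (m * l),
          ← zpow_add₀ hω0]
        congr 1
        push_cast
        ring
      rw [mul_pow, ← pow_mul, ← hpow]
      ring
    have H1 : ∀ m ∈ range N, HasSum (fun l : ℕ => ∑ j ∈ range n, ∑ k ∈ range n,
        (r : ℂ) ^ l * (ω ^ ((m : ℤ) * ((l : ℤ) + (k : ℤ) - (j : ℤ))) * (inner ℂ ((T l) (x j)) (y k) : ℂ)))
        (inner ℂ ((∑' l : ℕ, (z m) ^ l • T l) (f m)) (g m) : ℂ) := by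
      intro m hm
      have := hasSum_inner_G T hM (hznorm m) (f m) (g m)
      rwa [hterm m hm] at this
    have H2 := hasSum_sum H1
    have hswap : (fun l : ℕ => ∑ m ∈ range N, ∑ j ∈ range n, ∑ k ∈ range n,
        (r : ℂ) ^ l * (ω ^ ((m : ℤ) * ((l : ℤ) + (k : ℤ) - (j : ℤ))) * (inner ℂ ((T l) (x j)) (y k) : ℂ)))
        = fun l : ℕ => (N : ℂ) * ∑ j ∈ range n, ∑ k ∈ range n,
            (if (N : ℤ) ∣ ((l : ℤ) + (k : ℤ) - (j : ℤ)) then (r : ℂ) ^ l * (inner ℂ ((T l) (x j)) (y k) : ℂ) else 0) := by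
      funext l
      rw [Finset.sum_comm]
      rw [Finset.mul_sum]
      refine Finset.sum_congr rfl fun j _ => ?_
      rw [Finset.sum_comm]
      rw [Finset.mul_sum]
      refine Finset.sum_congr rfl fun k _ => ?_
      have h1 : ∑ m ∈ range N, (r : ℂ) ^ l * (ω ^ ((m : ℤ) * ((l : ℤ) + (k : ℤ) - (j : ℤ)))
            * (inner ℂ ((T l) (x j)) (y k) : ℂ))
          = (∑ m ∈ range N, ω ^ ((m : ℤ) * ((l : ℤ) + (k : ℤ) - (j : ℤ))))
            * ((r : ℂ) ^ l * (inner ℂ ((T l) (x j)) (y k) : ℂ)) := by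
        rw [Finset.sum_mul]
        exact Finset.sum_congr rfl fun m _ => by ring
      rw [h1, rootsum N hN ((l : ℤ) + (k : ℤ) - (j : ℤ))]
      split_ifs with h2
      · ring
      · ring
    rw [hswap] at H2
    have H4 : HasSum (fun l : ℕ => (N : ℂ) * ∑ j ∈ range n, ∑ k ∈ range n,
        (if (N : ℤ) ∣ ((l : ℤ) + (k : ℤ) - (j : ℤ)) then (r : ℂ) ^ l * (inner ℂ ((T l) (x j)) (y k) : ℂ) else 0))
        ((N : ℂ) * ∑ j ∈ range n, ∑ k ∈ range n, S j k) :=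
      (hasSum_sum fun j _ => hasSum_sum fun k _ => (hSsummand j k).hasSum).mul_left _
    exact H2.unique H4
  -- norm bound on the averaged quantity
  set a : ℝ := ∑ j ∈ range n, ‖x j‖ ^ 2 with ha
  set b : ℝ := ∑ k ∈ range n, ‖y k‖ ^ 2 with hb
  have ha0 : 0 ≤ a := Finset.sum_nonneg fun j _ => sq_nonneg _
  have hb0 : 0 ≤ b := Finset.sum_nonneg fun k _ => sq_nonneg _
  have hDnorm : ‖∑ j ∈ range n, ∑ k ∈ range n, S j k‖
      ≤ C * Real.sqrt a * Real.sqrt b := by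
    have hN0 : (0:ℝ) < (N : ℝ) := by exact_mod_cast hN
    have h1 : ‖∑ m ∈ range N, (inner ℂ ((∑' l : ℕ, (z m) ^ l • T l) (f m)) (g m) : ℂ)‖
        ≤ C * (Real.sqrt ((N : ℝ) * a) * Real.sqrt ((N : ℝ) * b)) := by
      calc ‖∑ m ∈ range N, (inner ℂ ((∑' l : ℕ, (z m) ^ l • T l) (f m)) (g m) : ℂ)‖
          ≤ ∑ m ∈ range N, ‖(inner ℂ ((∑' l : ℕ, (z m) ^ l • T l) (f m)) (g m) : ℂ)‖ :=
            norm_sum_le _ _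
        _ ≤ ∑ m ∈ range N, C * (‖f m‖ * ‖g m‖) := by
            refine Finset.sum_le_sum fun m _ => ?_
            calc ‖(inner ℂ ((∑' l : ℕ, (z m) ^ l • T l) (f m)) (g m) : ℂ)‖
                ≤ ‖(∑' l : ℕ, (z m) ^ l • T l) (f m)‖ * ‖g m‖ := norm_inner_le_norm _ _
              _ ≤ (‖∑' l : ℕ, (z m) ^ l • T l‖ * ‖f m‖) * ‖g m‖ :=
                  mul_le_mul_of_nonneg_right
                    ((∑' l : ℕ, (z m) ^ l • T l).le_opNorm (f m)) (norm_nonneg _)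
              _ ≤ (C * ‖f m‖) * ‖g m‖ :=
                  mul_le_mul_of_nonneg_right (mul_le_mul_of_nonneg_right
                    (hG (z m) (hznorm m)) (norm_nonneg _)) (norm_nonneg _)
              _ = C * (‖f m‖ * ‖g m‖) := by ring
        _ = C * ∑ m ∈ range N, ‖f m‖ * ‖g m‖ := by rw [Finset.mul_sum]
        _ ≤ C * (Real.sqrt (∑ m ∈ range N, ‖f m‖ ^ 2)
              * Real.sqrt (∑ m ∈ range N, ‖g m‖ ^ 2)) := by
            refine mul_le_mul_of_nonneg_left ?_ hC
            exact Real.sum_mul_le_sqrt_mul_sqrt _ _ _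
        _ = C * (Real.sqrt ((N : ℝ) * a) * Real.sqrt ((N : ℝ) * b)) := by
            rw [hf, hg, parseval N n hN hnN x, parseval N n hN hnN y, ha, hb]
    rw [hkey] at h1
    rw [norm_mul, Complex.norm_natCast] at h1
    have h2 : Real.sqrt ((N : ℝ) * a) * Real.sqrt ((N : ℝ) * b)
        = (N : ℝ) * (Real.sqrt a * Real.sqrt b) := by
      rw [Real.sqrt_mul hN0.le, Real.sqrt_mul hN0.le]
      have := Real.mul_self_sqrt hN0.le
      calc Real.sqrt (N : ℝ) * Real.sqrt a * (Real.sqrt (N : ℝ) * Real.sqrt b)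
          = (Real.sqrt (N : ℝ) * Real.sqrt (N : ℝ)) * (Real.sqrt a * Real.sqrt b) := by ring
        _ = (N : ℝ) * (Real.sqrt a * Real.sqrt b) := by rw [this]
    rw [h2] at h1
    have h3 : (N : ℝ) * ‖∑ j ∈ range n, ∑ k ∈ range n, S j k‖
        ≤ (N : ℝ) * (C * (Real.sqrt a * Real.sqrt b)) := by
      calc (N : ℝ) * ‖∑ j ∈ range n, ∑ k ∈ range n, S j k‖
          ≤ C * ((N : ℝ) * (Real.sqrt a * Real.sqrt b)) := h1
        _ = (N : ℝ) * (C * (Real.sqrt a * Real.sqrt b)) := by ring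
    have := le_of_mul_le_mul_left h3 hN0
    calc ‖∑ j ∈ range n, ∑ k ∈ range n, S j k‖ ≤ C * (Real.sqrt a * Real.sqrt b) := this
      _ = C * Real.sqrt a * Real.sqrt b := by ring
  -- compare S with the main term
  have hcomp : ‖∑ j ∈ range n, ∑ k ∈ range n,
      (if k ≤ j then (r : ℂ) ^ (j - k) * (inner ℂ ((T (j - k)) (x j)) (y k) : ℂ) else 0)
      - ∑ j ∈ range n, ∑ k ∈ range n, S j k‖
      ≤ M * ((∑ j ∈ range n, ‖x j‖) * (∑ k ∈ range n, ‖y k‖)) * (r ^ (N - n) * (1 - r)⁻¹) := by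
    rw [← Finset.sum_sub_distrib]
    have hterm2 : ∀ j ∈ range n, ‖∑ k ∈ range n,
        ((if k ≤ j then (r : ℂ) ^ (j - k) * (inner ℂ ((T (j - k)) (x j)) (y k) : ℂ) else 0) - S j k)‖
        ≤ ∑ k ∈ range n, (M * (‖x j‖ * ‖y k‖)) * (r ^ (N - n) * (1 - r)⁻¹) := by
      intro j hj
      calc ‖∑ k ∈ range n, ((if k ≤ j then (r : ℂ) ^ (j - k) * (inner ℂ ((T (j - k)) (x j)) (y k) : ℂ) else 0) - S j k)‖
          ≤ ∑ k ∈ range n,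
            ‖(if k ≤ j then (r : ℂ) ^ (j - k) * (inner ℂ ((T (j - k)) (x j)) (y k) : ℂ) else 0) - S j k‖ :=
            norm_sum_le _ _
        _ ≤ ∑ k ∈ range n, (M * (‖x j‖ * ‖y k‖)) * (r ^ (N - n) * (1 - r)⁻¹) := by
            refine Finset.sum_le_sum fun k hk => ?_
            rw [norm_sub_rev]
            have := tail_jk (c := fun l => (inner ℂ ((T l) (x j)) (y k) : ℂ)) (K := M * (‖x j‖ * ‖y k‖))
              (by positivity) (fun l => hcb l j k) hr0 hr1 N n j k hnN
              (mem_range.mp hj) (mem_range.mp hk)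
            calc ‖S j k - (if k ≤ j then (r : ℂ) ^ (j - k) * (inner ℂ ((T (j - k)) (x j)) (y k) : ℂ) else 0)‖
                ≤ M * (‖x j‖ * ‖y k‖) * r ^ (N - n) * (1 - r)⁻¹ := this
              _ = (M * (‖x j‖ * ‖y k‖)) * (r ^ (N - n) * (1 - r)⁻¹) := by ring
    calc ‖∑ j ∈ range n, (∑ k ∈ range n,
        (if k ≤ j then (r : ℂ) ^ (j - k) * (inner ℂ ((T (j - k)) (x j)) (y k) : ℂ) else 0) - ∑ k ∈ range n, S j k)‖
        ≤ ∑ j ∈ range n, ‖∑ k ∈ range n,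
          (if k ≤ j then (r : ℂ) ^ (j - k) * (inner ℂ ((T (j - k)) (x j)) (y k) : ℂ) else 0) - ∑ k ∈ range n, S j k‖ :=
          norm_sum_le _ _
      _ ≤ ∑ j ∈ range n, ∑ k ∈ range n, (M * (‖x j‖ * ‖y k‖)) * (r ^ (N - n) * (1 - r)⁻¹) := by
          refine Finset.sum_le_sum fun j hj => ?_
          rw [← Finset.sum_sub_distrib]
          exact hterm2 j hj
      _ = M * ((∑ j ∈ range n, ‖x j‖) * (∑ k ∈ range n, ‖y k‖))
          * (r ^ (N - n) * (1 - r)⁻¹) := by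
          have h4 : ∀ j : ℕ, ∑ k ∈ range n,
              (M * (‖x j‖ * ‖y k‖)) * (r ^ (N - n) * (1 - r)⁻¹)
              = (M * (r ^ (N - n) * (1 - r)⁻¹) * ‖x j‖) * ∑ k ∈ range n, ‖y k‖ := by
            intro j
            rw [Finset.mul_sum]
            exact Finset.sum_congr rfl fun k _ => by ring
          rw [Finset.sum_congr rfl fun j _ => h4 j, ← Finset.sum_mul]
          rw [← Finset.mul_sum]
          ring
  -- conclude
  have htri : ‖∑ j ∈ range n, ∑ k ∈ range n,
      (if k ≤ j then (r : ℂ) ^ (j - k) * (inner ℂ ((T (j - k)) (x j)) (y k) : ℂ) else 0)‖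
      ≤ ‖∑ j ∈ range n, ∑ k ∈ range n, S j k‖
        + ‖∑ j ∈ range n, ∑ k ∈ range n,
            (if k ≤ j then (r : ℂ) ^ (j - k) * (inner ℂ ((T (j - k)) (x j)) (y k) : ℂ) else 0)
          - ∑ j ∈ range n, ∑ k ∈ range n, S j k‖ :=
    norm_le_norm_add_norm_sub' _ _
  have := htri
  linarith [hDnorm, hcomp]


/-- limit version of the hard bound -/
lemma hard_final (T : ℕ → (H →L[ℂ] H)) {M : ℝ} (hM : ∀ l, ‖T l‖ ≤ M) {C : ℝ} (hC : 0 ≤ C)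
    (hG : ∀ z : ℂ, ‖z‖ < 1 → ‖∑' l : ℕ, z ^ l • T l‖ ≤ C) (n : ℕ) (x y : ℕ → H) :
    ‖∑ j ∈ range n, ∑ k ∈ range n,
        (if k ≤ j then (inner ℂ ((T (j - k)) (x j)) (y k) : ℂ) else 0)‖
      ≤ C * Real.sqrt (∑ j ∈ range n, ‖x j‖ ^ 2)
        * Real.sqrt (∑ k ∈ range n, ‖y k‖ ^ 2) := by
  have hM0 : 0 ≤ M := le_trans (norm_nonneg _) (hM 0)
  set X : ℝ := ∑ j ∈ range n, ‖x j‖ with hX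
  set Y : ℝ := ∑ k ∈ range n, ‖y k‖ with hY
  have hX0 : 0 ≤ X := Finset.sum_nonneg fun j _ => norm_nonneg _
  have hY0 : 0 ≤ Y := Finset.sum_nonneg fun k _ => norm_nonneg _
  set B : ℝ := M * (X * Y) with hB
  have hB0 : 0 ≤ B := by positivity
  refine le_of_forall_pos_le_add fun ε hε => ?_
  -- choose r
  set δ : ℝ := min (1/2) (ε / (2 * (n + 1) * (B + 1))) with hδ
  have hδ0 : 0 < δ := lt_min (by norm_num) (by positivity)
  have hδh : δ ≤ 1/2 := min_le_left _ _
  have hδε : δ ≤ ε / (2 * (n + 1) * (B + 1)) := min_le_right _ _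
  set r : ℝ := 1 - δ with hr
  have hr0 : 0 ≤ r := by rw [hr]; linarith
  have hr1 : r < 1 := by rw [hr]; linarith
  have h1r : 1 - r = δ := by rw [hr]; ring
  -- choose N
  obtain ⟨m, hm⟩ := exists_pow_lt_of_lt_one
    (show 0 < (ε / 2) * δ / (B + 1) by positivity) hr1
  set N : ℕ := n + m + 1 with hN
  have hnN : n ≤ N := by omega
  have hNpos : 0 < N := by omega
  have hNn : N - n = m + 1 := by omega
  have key := hard_bound T hM hC hG n x y hr0 hr1 hnN hNpos
  -- bound the error term in key
  have hErr : M * (X * Y) * (r ^ (N - n) * (1 - r)⁻¹) ≤ ε / 2 := by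
    rw [hNn, h1r]
    have hr_m : r ^ (m + 1) ≤ r ^ m := by
      rw [pow_succ]
      nlinarith [pow_nonneg hr0 m]
    have h2 : r ^ (m + 1) < (ε / 2) * δ / (B + 1) := lt_of_le_of_lt hr_m hm
    have h3 : r ^ (m + 1) * δ⁻¹ ≤ ((ε / 2) * δ / (B + 1)) * δ⁻¹ :=
      mul_le_mul_of_nonneg_right h2.le (by positivity)
    have h4 : ((ε / 2) * δ / (B + 1)) * δ⁻¹ = (ε / 2) / (B + 1) := by
      field_simp
    rw [h4] at h3
    calc M * (X * Y) * (r ^ (m + 1) * δ⁻¹) = B * (r ^ (m + 1) * δ⁻¹) := by rw [hB]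
      _ ≤ B * ((ε / 2) / (B + 1)) := mul_le_mul_of_nonneg_left h3 hB0
      _ = (ε / 2) * (B / (B + 1)) := by ring
      _ ≤ (ε / 2) * 1 := by
          refine mul_le_mul_of_nonneg_left ?_ (by positivity)
          rw [div_le_one (by positivity)]
          linarith
      _ = ε / 2 := by ring
  -- bound the difference Target - Main
  have hTM : ‖∑ j ∈ range n, ∑ k ∈ range n,
      (if k ≤ j then (inner ℂ ((T (j - k)) (x j)) (y k) : ℂ) else 0)
      - ∑ j ∈ range n, ∑ k ∈ range n,
      (if k ≤ j then (r : ℂ) ^ (j - k) * (inner ℂ ((T (j - k)) (x j)) (y k) : ℂ) else 0)‖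
      ≤ ε / 2 := by
    have hcollapse : (∑ j ∈ range n, ∑ k ∈ range n,
        (if k ≤ j then (inner ℂ ((T (j - k)) (x j)) (y k) : ℂ) else 0))
        - ∑ j ∈ range n, ∑ k ∈ range n,
        (if k ≤ j then (r : ℂ) ^ (j - k) * (inner ℂ ((T (j - k)) (x j)) (y k) : ℂ) else 0)
        = ∑ j ∈ range n, ∑ k ∈ range n,
          ((if k ≤ j then (inner ℂ ((T (j - k)) (x j)) (y k) : ℂ) else 0)
            - (if k ≤ j then (r : ℂ) ^ (j - k) * (inner ℂ ((T (j - k)) (x j)) (y k) : ℂ) else 0)) := by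
      rw [← Finset.sum_sub_distrib]
      exact Finset.sum_congr rfl fun j _ => by rw [← Finset.sum_sub_distrib]
    rw [hcollapse]
    have hrn1 : r ^ n ≤ 1 := pow_le_one₀ hr0 hr1.le
    have hterm : ∀ j ∈ range n, ∀ k ∈ range n,
        ‖(if k ≤ j then (inner ℂ ((T (j - k)) (x j)) (y k) : ℂ) else 0)
          - (if k ≤ j then (r : ℂ) ^ (j - k) * (inner ℂ ((T (j - k)) (x j)) (y k) : ℂ) else 0)‖
        ≤ (1 - r ^ n) * (M * (‖x j‖ * ‖y k‖)) := by
      intro j hj k hk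
      by_cases hkj : k ≤ j
      · rw [if_pos hkj, if_pos hkj]
        have heq : (inner ℂ ((T (j - k)) (x j)) (y k) : ℂ)
            - (r : ℂ) ^ (j - k) * (inner ℂ ((T (j - k)) (x j)) (y k) : ℂ)
            = ((1 - r ^ (j - k) : ℝ) : ℂ) * (inner ℂ ((T (j - k)) (x j)) (y k) : ℂ) := by
          push_cast
          ring
        rw [heq, norm_mul, Complex.norm_real, Real.norm_eq_abs]
        have hjn := mem_range.mp hj
        have hjk : r ^ n ≤ r ^ (j - k) :=
          pow_le_pow_of_le_one hr0 hr1.le (by omega : j - k ≤ n)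
        have hjk1 : r ^ (j - k) ≤ 1 := pow_le_one₀ hr0 hr1.le
        rw [abs_of_nonneg (by linarith)]
        exact mul_le_mul (by linarith) (norm_inner_T_le T hM (j - k) (x j) (y k))
          (norm_nonneg _) (by linarith)
      · rw [if_neg hkj, if_neg hkj, sub_zero, norm_zero]
        exact mul_nonneg (by linarith) (by positivity)
    have hsumb : ‖∑ j ∈ range n, ∑ k ∈ range n,
        ((if k ≤ j then (inner ℂ ((T (j - k)) (x j)) (y k) : ℂ) else 0)
          - (if k ≤ j then (r : ℂ) ^ (j - k) * (inner ℂ ((T (j - k)) (x j)) (y k) : ℂ) else 0))‖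
        ≤ (1 - r ^ n) * B := by
      calc ‖∑ j ∈ range n, ∑ k ∈ range n,
          ((if k ≤ j then (inner ℂ ((T (j - k)) (x j)) (y k) : ℂ) else 0)
            - (if k ≤ j then (r : ℂ) ^ (j - k) * (inner ℂ ((T (j - k)) (x j)) (y k) : ℂ) else 0))‖
          ≤ ∑ j ∈ range n, ∑ k ∈ range n, (1 - r ^ n) * (M * (‖x j‖ * ‖y k‖)) := by
            refine (norm_sum_le _ _).trans (Finset.sum_le_sum fun j hj => ?_)
            refine (norm_sum_le _ _).trans (Finset.sum_le_sum fun k hk => ?_)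
            exact hterm j hj k hk
        _ = (1 - r ^ n) * B := by
            have h4 : ∀ j : ℕ, ∑ k ∈ range n, (1 - r ^ n) * (M * (‖x j‖ * ‖y k‖))
                = ((1 - r ^ n) * M * ‖x j‖) * ∑ k ∈ range n, ‖y k‖ := by
              intro j
              rw [Finset.mul_sum]
              exact Finset.sum_congr rfl fun k _ => by ring
            rw [Finset.sum_congr rfl fun j _ => h4 j, ← Finset.sum_mul, ← Finset.mul_sum]
            rw [hB, ← hX, ← hY]
            ring
    refine hsumb.trans ?_
    -- (1 - r^n) * B ≤ ε/2 via Bernoulli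
    have hbern : 1 - r ^ n ≤ (n : ℝ) * δ := by
      have := one_add_mul_le_pow (show (-2:ℝ) ≤ -δ by linarith) n
      have h5 : (1 : ℝ) + (n : ℝ) * (-δ) ≤ r ^ n := by
        rw [hr]
        calc (1 : ℝ) + (n : ℝ) * (-δ) ≤ (1 + -δ) ^ n := this
          _ = (1 - δ) ^ n := by ring_nf
      linarith
    have hn1 : (0:ℝ) < (n : ℝ) + 1 := by positivity
    have hfin : (n : ℝ) * δ * B ≤ ε / 2 := by
      have hδ2 : δ * (2 * ((n:ℝ) + 1) * (B + 1)) ≤ ε := by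
        rw [le_div_iff₀ (by positivity)] at hδε
        linarith [hδε]
      have hnn : (n : ℝ) * B ≤ ((n:ℝ) + 1) * (B + 1) := by nlinarith
      nlinarith [hδ0.le, mul_le_mul_of_nonneg_left hnn hδ0.le]
    have h1rn : 0 ≤ 1 - r ^ n := by
      have : r ^ n ≤ 1 := pow_le_one₀ hr0 hr1.le
      linarith
    calc (1 - r ^ n) * B ≤ ((n : ℝ) * δ) * B :=
          mul_le_mul_of_nonneg_right hbern hB0
      _ ≤ ε / 2 := by
          calc (n : ℝ) * δ * B = (n : ℝ) * δ * B := rfl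
            _ ≤ ε / 2 := by nlinarith [hfin]
  -- combine
  have htri : ‖∑ j ∈ range n, ∑ k ∈ range n,
      (if k ≤ j then (inner ℂ ((T (j - k)) (x j)) (y k) : ℂ) else 0)‖
      ≤ ‖∑ j ∈ range n, ∑ k ∈ range n,
        (if k ≤ j then (r : ℂ) ^ (j - k) * (inner ℂ ((T (j - k)) (x j)) (y k) : ℂ) else 0)‖
        + ‖∑ j ∈ range n, ∑ k ∈ range n,
            (if k ≤ j then (inner ℂ ((T (j - k)) (x j)) (y k) : ℂ) else 0)
          - ∑ j ∈ range n, ∑ k ∈ range n,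
            (if k ≤ j then (r : ℂ) ^ (j - k) * (inner ℂ ((T (j - k)) (x j)) (y k) : ℂ) else 0)‖ :=
    norm_le_norm_add_norm_sub' _ _
  have hXY : M * (X * Y) = B := rfl
  linarith [key, hErr, hTM, htri]

/-- reduce SchurBoundedBy to ranges -/
lemma schur_of_ranges (A : ℕ → ℕ → (H →L[ℂ] H)) (C : ℝ)
    (h : ∀ n : ℕ, ∀ x y : ℕ → H,
      ‖∑ k ∈ range n, ∑ j ∈ range n, (inner ℂ (A k j (x j)) (y k) : ℂ)‖
        ≤ C * Real.sqrt (∑ j ∈ range n, ‖x j‖ ^ 2)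
          * Real.sqrt (∑ k ∈ range n, ‖y k‖ ^ 2)) :
    SchurBoundedBy A C := by
  intro F G x y
  obtain ⟨n, hn⟩ := Finset.exists_nat_subset_range (F ∪ G)
  have hF : F ⊆ range n := fun i hi => hn (Finset.mem_union_left _ hi)
  have hG : G ⊆ range n := fun i hi => hn (Finset.mem_union_right _ hi)
  set x' : ℕ → H := fun j => if j ∈ F then x j else 0 with hx'
  set y' : ℕ → H := fun k => if k ∈ G then y k else 0 with hy'
  have hLHS : ∑ k ∈ G, ∑ j ∈ F, (inner ℂ (A k j (x j)) (y k) : ℂ)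
      = ∑ k ∈ range n, ∑ j ∈ range n, (inner ℂ (A k j (x' j)) (y' k) : ℂ) := by
    rw [← Finset.sum_subset hG (fun k _ hk => ?_)]
    · refine Finset.sum_congr rfl fun k hk => ?_
      rw [← Finset.sum_subset hF (fun j _ hj => ?_)]
      · refine Finset.sum_congr rfl fun j hj => ?_
        rw [hx', hy']
        simp only [if_pos hj, if_pos hk]
      · rw [hx']
        simp only [if_neg hj, map_zero, inner_zero_left]
    · have : y' k = 0 := by rw [hy']; simp only [if_neg hk]
      rw [this]
      simp only [inner_zero_right, Finset.sum_const_zero]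
  have hxs : ∑ j ∈ F, ‖x j‖ ^ 2 = ∑ j ∈ range n, ‖x' j‖ ^ 2 := by
    rw [← Finset.sum_subset hF (fun j _ hj => ?_)]
    · refine Finset.sum_congr rfl fun j hj => by rw [hx']; simp only [if_pos hj]
    · rw [hx']; simp only [if_neg hj, norm_zero]; ring
  have hys : ∑ k ∈ G, ‖y k‖ ^ 2 = ∑ k ∈ range n, ‖y' k‖ ^ 2 := by
    rw [← Finset.sum_subset hG (fun k _ hk => ?_)]
    · refine Finset.sum_congr rfl fun k hk => by rw [hy']; simp only [if_pos hk]
    · rw [hy']; simp only [if_neg hk, norm_zero]; ring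
  rw [hLHS, hxs, hys]
  exact h n x' y'


end ToepAux

/-- For an upper triangular Toeplitz matrix `A = (T_{j−k})` with `sup_l ‖T_l‖ < ∞` and
`G_A(z) = ∑_{l≥0} T_l z^l`: `A ∈ B(ℓ²(H))` iff `G_A ∈ H^∞(𝔻,B(H))`, and
`‖A‖_{B(ℓ²(H))} = sup_{|z|<1} ‖G_A(z)‖` (expressed via: for every `C ≥ 0`, the bounds
agree). -/
theorem uppertriangular_toeplitz_Hinfty (T : ℕ → (H →L[ℂ] H))
    (hbdd : ∃ M : ℝ, ∀ l : ℕ, ‖T l‖ ≤ M) :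
    (MemB (fun k j => if k ≤ j then T (j - k) else 0) ↔
        ∃ C : ℝ, ∀ z : ℂ, ‖z‖ < 1 → ‖∑' l : ℕ, z ^ l • T l‖ ≤ C) ∧
      ∀ C : ℝ, 0 ≤ C →
        (SchurBoundedBy (fun k j => if k ≤ j then T (j - k) else 0) C ↔
          ∀ z : ℂ, ‖z‖ < 1 → ‖∑' l : ℕ, z ^ l • T l‖ ≤ C) := by
  obtain ⟨M, hM⟩ := hbdd
  have hM0 : 0 ≤ M := le_trans (norm_nonneg _) (hM 0)
  have iff2 : ∀ C : ℝ, 0 ≤ C →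
      (SchurBoundedBy (fun k j => if k ≤ j then T (j - k) else 0) C ↔
        ∀ z : ℂ, ‖z‖ < 1 → ‖∑' l : ℕ, z ^ l • T l‖ ≤ C) := by
    intro C hC
    constructor
    · intro hS z hz
      exact ToepAux.opnorm_le T hM hC hS z hz
    · intro hG2
      refine ToepAux.schur_of_ranges _ C (fun n x y => ?_)
      have hmain := ToepAux.hard_final T hM hC hG2 n x y
      refine le_trans (le_of_eq ?_) hmain
      congr 1
      rw [Finset.sum_comm]
      refine Finset.sum_congr rfl fun j _ => Finset.sum_congr rfl fun k _ => ?_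
      by_cases hkj : k ≤ j <;> simp [hkj]
  constructor
  · constructor
    · rintro ⟨C, hC0, hS⟩
      exact ⟨C, (iff2 C hC0).mp hS⟩
    · rintro ⟨C, hG2⟩
      have hC0 : 0 ≤ C := le_trans (norm_nonneg _) (hG2 0 (by simp))
      exact ⟨C, hC0, (iff2 C hC0).mpr hG2⟩
  · exact iff2
end
end
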